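/- arXiv:1511.04291 — 8 statements merged into one kernel-verified Lean document; each statement's English description precedes it below -/
import Mathlib

section
/- Let P and Q be discrete p-toral groups (groups containing a normal subgroup isomorphic to a finite direct power of the Prüfer p-group ℤ/p^∞, of p-power index) with P a proper subgroup of Q. Then P is a proper subgroup of its normalizer N_Q(P). -/
open scoped Pointwise

/-- The Prüfer `p`-group, realized as the `p`-power torsion of `ℚ/ℤ`. -/
def Prufer (p : ℕ) : AddSubgroup (AddCircle (1 : ℚ)) where
  carrier := {x | ∃ n : ℕ, (p ^ n : ℕ) • x = 0}
  zero_mem' := ⟨0, smul_zero _⟩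
  add_mem' := by
    rintro a b ⟨m, hm⟩ ⟨n, hn⟩
    refine ⟨m + n, ?_⟩
    have h1 : (p ^ (m + n) : ℕ) • a = 0 := by
      rw [show p ^ (m + n) = p ^ n * p ^ m by ring, mul_smul, hm, smul_zero]
    have h2 : (p ^ (m + n) : ℕ) • b = 0 := by
      rw [show p ^ (m + n) = p ^ m * p ^ n by ring, mul_smul, hn, smul_zero]
    rw [smul_add, h1, h2, add_zero]
  neg_mem' := by
    rintro a ⟨m, hm⟩
    exact ⟨m, by rw [smul_neg, hm, neg_zero]⟩

/-- `T` is a discrete `p`-torus: isomorphic to a finite direct power of the Prüfer `p`-group. -/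
def IsPTorus (p : ℕ) (T : Type*) [Group T] : Prop :=
  ∃ r : ℕ, Nonempty (T ≃* Multiplicative (Fin r → Prufer p))

/-- `G` is a discrete `p`-toral group: it has a normal discrete `p`-torus of `p`-power index. -/
def IsDiscretePToral (p : ℕ) (G : Type*) [Group G] : Prop :=
  ∃ T : Subgroup G, T.Normal ∧ IsPTorus p ↥T ∧ ∃ k : ℕ, Nat.card (G ⧸ T) = p ^ k

/-- `G` is a virtually discrete `p`-toral group: it has a normal discrete `p`-torus of
finite index. -/
def IsVirtuallyDiscretePToral (p : ℕ) (G : Type*) [Group G] : Prop :=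
  ∃ T : Subgroup G, T.Normal ∧ IsPTorus p ↥T ∧ Finite (G ⧸ T)

/-- A subgroup is discrete `p`-toral. -/
def IsDiscretePToralSubgroup (p : ℕ) {G : Type*} [Group G] (H : Subgroup G) : Prop :=
  IsDiscretePToral p ↥H

/-- A Sylow `p`-subgroup of a virtually discrete `p`-toral group:
a maximal discrete `p`-toral subgroup. -/
def IsMaxDiscretePToralSubgroup (p : ℕ) {G : Type*} [Group G] (S : Subgroup G) : Prop :=
  IsDiscretePToralSubgroup p S ∧
    ∀ P : Subgroup G, IsDiscretePToralSubgroup p P → S ≤ P → P = S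

/-- The identity component `Γ₀`: the (unique maximal) discrete `p`-torus subgroup,
realized as the subgroup generated by all discrete `p`-torus subgroups. -/
def identityComponent (p : ℕ) (G : Type*) [Group G] : Subgroup G :=
  ⨆ T ∈ {T : Subgroup G | IsPTorus p ↥T}, T

/-- `Ω_n(D)`: the subgroup of elements of order dividing `p ^ n`. -/
def Omega (p n : ℕ) (D : Type*) [CommGroup D] : Subgroup D where
  carrier := {x | x ^ p ^ n = 1}
  one_mem' := one_pow _
  mul_mem' := by
    intro a b ha hb
    simp only [Set.mem_setOf_eq] at *
    rw [mul_pow, ha, hb, one_mul]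
  inv_mem' := by
    intro a ha
    simp only [Set.mem_setOf_eq] at *
    rw [inv_pow, ha, inv_one]

/-- `D₀` is the maximal divisible subgroup of `D`. -/
def IsMaxDivisible {D : Type*} [CommGroup D] (D₀ : Subgroup D) : Prop :=
  (∀ x ∈ D₀, ∀ n : ℕ, n ≠ 0 → ∃ y ∈ D₀, y ^ n = x) ∧
    ∀ E : Subgroup D, (∀ x ∈ E, ∀ n : ℕ, n ≠ 0 → ∃ y ∈ E, y ^ n = x) → E ≤ D₀

/-- The subgroup of points of `D` fixed by every element of `A ⊆ G`. -/
def fixedSub (G : Type*) [Group G] (D : Type*) [Group D] [MulDistribMulAction G D]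
    (A : Set G) : Subgroup D where
  carrier := {x | ∀ a ∈ A, a • x = x}
  one_mem' := fun a _ => smul_one a
  mul_mem' := by
    intro x y hx hy a ha
    rw [smul_mul', hx a ha, hy a ha]
  inv_mem' := by
    intro x hx a ha
    rw [smul_inv', hx a ha]

/-- The commutator `[W, A]` of a subgroup `W ≤ D` with a set `A ⊆ G` acting on `D`. -/
def actComm (G : Type*) [Group G] {D : Type*} [Group D] [MulDistribMulAction G D]
    (A : Set G) (W : Subgroup D) : Subgroup D :=
  Subgroup.closure {x | ∃ w ∈ W, ∃ a ∈ A, x = w⁻¹ * a • w}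

/-- `R` is a set of representatives for the (left) cosets of `H` inside `K`. -/
def IsRelTransversal {G : Type*} [Group G] (H K : Subgroup G) (R : Finset G) : Prop :=
  (↑R : Set G) ⊆ (K : Set G) ∧ ∀ g ∈ K, ∃! r, r ∈ R ∧ r⁻¹ * g ∈ H

/-- `A` is an offender of `G` on `D` (relative to the identity component `D₀`). -/
def IsOffender (p : ℕ) {G D : Type*} [Group G] [CommGroup D] [MulDistribMulAction G D]
    (D₀ : Subgroup D) (A : Subgroup G) : Prop :=
  IsPGroup p ↥A ∧ (∀ x ∈ A, ∀ y ∈ A, x * y = y * x) ∧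
    D₀ ≤ fixedSub G D (A : Set G) ∧
    (fixedSub G D (A : Set G)).index ≠ 0 ∧
    (fixedSub G D (A : Set G)).index ≤ Nat.card A

/-- `A` is a best offender of `G` on `D` (relative to the identity component `D₀`). -/
def IsBestOffender (p : ℕ) {G D : Type*} [Group G] [CommGroup D] [MulDistribMulAction G D]
    (D₀ : Subgroup D) (A : Subgroup G) : Prop :=
  IsPGroup p ↥A ∧ (∀ x ∈ A, ∀ y ∈ A, x * y = y * x) ∧
    D₀ ≤ fixedSub G D (A : Set G) ∧
    ∀ B : Subgroup G, B ≤ A →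
      Nat.card B * D₀.relIndex (fixedSub G D (B : Set G)) ≤
        Nat.card A * D₀.relIndex (fixedSub G D (A : Set G))

/-- `A` is an over-offender of `G` on `D`. -/
def IsOverOffender (p : ℕ) {G D : Type*} [Group G] [CommGroup D] [MulDistribMulAction G D]
    (D₀ : Subgroup D) (A : Subgroup G) : Prop :=
  IsBestOffender p D₀ A ∧
    D₀.index < Nat.card A * D₀.relIndex (fixedSub G D (A : Set G))

/-- `A` is a best offender of `G` on the invariant subgroup `W ≤ D` with identity
component `W₀`. -/
def IsBestOffenderOn (p : ℕ) {G D : Type*} [Group G] [CommGroup D] [MulDistribMulAction G D]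
    (W₀ W : Subgroup D) (A : Subgroup G) : Prop :=
  IsPGroup p ↥A ∧ (∀ x ∈ A, ∀ y ∈ A, x * y = y * x) ∧
    W₀ ≤ W ⊓ fixedSub G D (A : Set G) ∧
    ∀ B : Subgroup G, B ≤ A →
      Nat.card B * W₀.relIndex (W ⊓ fixedSub G D (B : Set G)) ≤
        Nat.card A * W₀.relIndex (W ⊓ fixedSub G D (A : Set G))

/-- `A` is an over-offender of `G` on the invariant subgroup `W ≤ D` with identity
component `W₀`. -/
def IsOverOffenderOn (p : ℕ) {G D : Type*} [Group G] [CommGroup D] [MulDistribMulAction G D]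
    (W₀ W : Subgroup D) (A : Subgroup G) : Prop :=
  IsBestOffenderOn p W₀ W A ∧
    W₀.relIndex W < Nat.card A * W₀.relIndex (W ⊓ fixedSub G D (A : Set G))

lemma IsPTorus.mulComm {p : ℕ} {T : Type*} [Group T] (h : IsPTorus p T) (a b : T) :
    a * b = b * a := by
  obtain ⟨r, ⟨e⟩⟩ := h
  apply e.injective
  rw [map_mul, map_mul, mul_comm]

lemma IsPTorus.isPGroup {p : ℕ} {T : Type*} [Group T] (h : IsPTorus p T) : IsPGroup p T := by
  obtain ⟨r, ⟨e⟩⟩ := h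
  intro a
  set y : Fin r → ↥(Prufer p) := Multiplicative.toAdd (e a) with hy
  have hmem : ∀ i, ∃ n : ℕ, (p ^ n : ℕ) • ((y i : AddCircle (1 : ℚ))) = 0 := fun i => (y i).2
  choose n hn using hmem
  set N : ℕ := Finset.univ.sup n with hN
  refine ⟨N, ?_⟩
  have key : (p ^ N : ℕ) • y = 0 := by
    funext i
    have hle : n i ≤ N := Finset.le_sup (Finset.mem_univ i)
    have hsplit : p ^ N = p ^ (N - n i) * p ^ (n i) := by
      rw [← pow_add, Nat.sub_add_cancel hle]
    rw [Pi.smul_apply, Pi.zero_apply]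
    apply Subtype.coe_injective
    show ((p ^ N • y i : ↥(Prufer p)) : AddCircle (1 : ℚ)) = ((0 : ↥(Prufer p)) : AddCircle (1 : ℚ))
    have hcoe : (((p ^ N : ℕ) • y i : ↥(Prufer p)) : AddCircle (1 : ℚ))
        = (p ^ N : ℕ) • ((y i : AddCircle (1 : ℚ))) := rfl
    rw [hcoe, hsplit, mul_smul, hn i, smul_zero]
    simp
  apply e.injective
  rw [map_pow, map_one]
  apply Multiplicative.toAdd.injective
  rw [toAdd_pow, ← hy, key, toAdd_one]

lemma finite_closure_of_torsion {V : Type*} [CommGroup V] (S : Finset V) (N : ℕ) (hN : 0 < N)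
    (hS : ∀ s ∈ S, s ^ N = 1) : Finite (Subgroup.closure (S : Set V)) := by
  classical
  haveI : NeZero N := ⟨hN.ne'⟩
  let φ : (↥S → Multiplicative (ZMod N)) →* V :=
    MonoidHom.mk' (fun e => ∏ s : ↥S, (s : V) ^ (Multiplicative.toAdd (e s)).val)
      (by
        intro a b
        rw [← Finset.prod_mul_distrib]
        refine Finset.prod_congr rfl fun s _ => ?_
        have hs : (s : V) ^ N = 1 := hS s s.2
        have hab : (Multiplicative.toAdd ((a * b) s)).val =
            ((Multiplicative.toAdd (a s)).val + (Multiplicative.toAdd (b s)).val) % N := by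
          show (Multiplicative.toAdd (a s * b s)).val = _
          rw [toAdd_mul, ZMod.val_add]
        rw [hab, ← pow_eq_pow_mod _ hs, pow_add])
  have hle : Subgroup.closure (S : Set V) ≤ φ.range := by
    rw [Subgroup.closure_le]
    intro s hs
    let g : ↥S → Multiplicative (ZMod N) := Pi.mulSingle ⟨s, hs⟩ (Multiplicative.ofAdd (1 : ZMod N))
    refine ⟨g, ?_⟩
    show (∏ t : ↥S, (t : V) ^ (Multiplicative.toAdd (g t)).val) = s
    rw [Finset.prod_eq_single (⟨s, hs⟩ : ↥S)]
    · simp only [g, Pi.mulSingle_eq_same, toAdd_ofAdd]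
      rw [ZMod.val_one_eq_one_mod, ← pow_eq_pow_mod _ (hS s hs), pow_one]
    · intro t _ ht
      simp only [g, Pi.mulSingle_eq_of_ne ht, toAdd_one, ZMod.val_zero, pow_zero]
    · intro ht
      exact absurd (Finset.mem_univ _) ht
  haveI : Finite ↥φ.range :=
    Finite.of_surjective φ.rangeRestrict φ.rangeRestrict_surjective
  exact Finite.of_injective (Subgroup.inclusion hle) (Subgroup.inclusion_injective hle)

/-- If `P` is a proper subgroup of a discrete `p`-toral group `Q`
(so `P` is itself discrete `p`-toral), then `P` is a proper subgroup of its
normalizer `N_Q(P)`. -/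
theorem proper_lt_normalizer (p : ℕ) (hp : p.Prime) (Q : Type*) [Group Q]
    (hQ : IsDiscretePToral p Q) (P : Subgroup Q) (hP : IsDiscretePToralSubgroup p P)
    (hPQ : P ≠ ⊤) :
    P < Subgroup.normalizer (P : Set Q) := by
  haveI : Fact p.Prime := ⟨hp⟩
  obtain ⟨T, hTnorm, hTtor, k, hcard⟩ := hQ
  haveI : T.Normal := hTnorm
  haveI : Finite (Q ⧸ T) :=
    Nat.finite_of_card_ne_zero (by rw [hcard]; exact (pow_pos hp.pos k).ne')
  have hQTp : IsPGroup p (Q ⧸ T) := IsPGroup.of_card hcard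
  by_cases hTP : T ≤ P
  · -- Case A : T ≤ P, reduce to the finite p-group Q ⧸ T
    haveI : Group.IsNilpotent (Q ⧸ T) := hQTp.isNilpotent
    have hnc : NormalizerCondition (Q ⧸ T) := normalizerCondition_of_isNilpotent
    have hker : (QuotientGroup.mk' T).ker ≤ P := by
      rw [QuotientGroup.ker_mk']; exact hTP
    have hcomap : (P.map (QuotientGroup.mk' T)).comap (QuotientGroup.mk' T) = P :=
      Subgroup.comap_map_eq_self hker
    have hne : P.map (QuotientGroup.mk' T) < ⊤ := by
      rcases lt_or_eq_of_le (le_top (a := P.map (QuotientGroup.mk' T))) with h | h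
      · exact h
      · exact absurd (by rw [← hcomap, h, Subgroup.comap_top]) hPQ
    have hlt := hnc _ hne
    have hsurj : Function.Surjective (QuotientGroup.mk' T) := QuotientGroup.mk'_surjective T
    rw [SetLike.lt_iff_le_and_exists] at hlt ⊢
    obtain ⟨_, y, hy1, hy2⟩ := hlt
    obtain ⟨g, rfl⟩ := hsurj y
    refine ⟨Subgroup.le_normalizer, g, ?_, ?_⟩
    · have hg : g ∈ (Subgroup.normalizer ((P.map (QuotientGroup.mk' T) : Subgroup (Q ⧸ T)) : Set (Q ⧸ T))).comap (QuotientGroup.mk' T) := hy1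
      rwa [Subgroup.comap_normalizer_eq_of_surjective _ hsurj, hcomap] at hg
    · intro hg
      exact hy2 (Subgroup.mem_map_of_mem _ hg)
  · -- Case B : T is not contained in P
    have hcomm : ∀ a b : ↥T, a * b = b * a := hTtor.mulComm
    have hTpg : IsPGroup p ↥T := hTtor.isPGroup
    set I : Subgroup ↥T := P.comap T.subtype with hIdef
    haveI hInorm : I.Normal := by
      constructor
      intro n hn g
      have hgn : g * n * g⁻¹ = n := by rw [hcomm g n, mul_inv_cancel_right]
      rwa [hgn]
    letI : CommGroup (↥T ⧸ I) :=
      { (inferInstance : Group (↥T ⧸ I)) with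
        mul_comm := by
          intro a b
          obtain ⟨a, rfl⟩ := QuotientGroup.mk'_surjective I a
          obtain ⟨b, rfl⟩ := QuotientGroup.mk'_surjective I b
          rw [← map_mul, ← map_mul, hcomm] }
    -- the conjugation action of Q ⧸ T on ↥T
    have hconj_triv : ∀ t : ↥T, MulAut.conjNormal ((t : Q)) = (1 : MulAut ↥T) := by
      intro t
      apply MulEquiv.ext
      intro σ
      apply Subtype.coe_injective
      have hc : (t : Q) * (σ : Q) = (σ : Q) * (t : Q) := by
        have h2 := congrArg (fun z : ↥T => (z : Q)) (hcomm t σ)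
        simpa using h2
      show ((MulAut.conjNormal ((t : Q)) σ : ↥T) : Q) = (((1 : MulAut ↥T) σ : ↥T) : Q)
      rw [MulAut.conjNormal_apply]
      show (t : Q) * (σ : Q) * (t : Q)⁻¹ = (σ : Q)
      rw [hc, mul_inv_cancel_right]
    have hkerc : T ≤ (MulAut.conjNormal : Q →* MulAut ↥T).ker := by
      intro t ht
      exact MonoidHom.mem_ker.mpr (hconj_triv ⟨t, ht⟩)
    set cbar : Q ⧸ T →* MulAut ↥T :=
      QuotientGroup.lift T (MulAut.conjNormal : Q →* MulAut ↥T) hkerc with hcbar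
    set F : Subgroup (Q ⧸ T) := P.map (QuotientGroup.mk' T) with hFdef
    have hFp : IsPGroup p ↥F := hQTp.to_subgroup F
    -- conjugation by elements of P preserves I
    have hpres : ∀ x ∈ P,
        Subgroup.map ((MulAut.conjNormal x : MulAut ↥T) : ↥T →* ↥T) I = I := by
      intro x hx
      apply le_antisymm
      · rintro σ ⟨τ, hτ, rfl⟩
        have hτ' : (τ : Q) ∈ P := hτ
        show T.subtype ((MulAut.conjNormal x : MulAut ↥T) τ) ∈ P
        rw [show T.subtype ((MulAut.conjNormal x : MulAut ↥T) τ) = x * (τ : Q) * x⁻¹ from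
          MulAut.conjNormal_apply x τ]
        exact mul_mem (mul_mem hx hτ') (inv_mem hx)
      · intro σ hσ
        have hσ' : (σ : Q) ∈ P := hσ
        refine Subgroup.mem_map.mpr ⟨(MulAut.conjNormal x : MulAut ↥T).symm σ, ?_,
          (MulAut.conjNormal x : MulAut ↥T).apply_symm_apply σ⟩
        show T.subtype ((MulAut.conjNormal x : MulAut ↥T).symm σ) ∈ P
        rw [show T.subtype ((MulAut.conjNormal x : MulAut ↥T).symm σ) = x⁻¹ * (σ : Q) * x from
          MulAut.conjNormal_symm_apply x σ]
        exact mul_mem (mul_mem (inv_mem hx) hσ') hx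
    have hpresF : ∀ f : ↥F, Subgroup.map ((cbar (f : Q ⧸ T)) : ↥T →* ↥T) I = I := by
      rintro ⟨f, hf⟩
      obtain ⟨x, hx, rfl⟩ := hf
      have hc : cbar ((QuotientGroup.mk' T) x) = MulAut.conjNormal x :=
        QuotientGroup.lift_mk' _ _ x
      show Subgroup.map ((cbar ((QuotientGroup.mk' T) x)) : ↥T →* ↥T) I = I
      rw [hc]
      exact hpres x hx
    let φ : ↥F →* MulAut (↥T ⧸ I) := MonoidHom.mk'
      (fun f => QuotientGroup.congr I I (cbar ↑f) (hpresF f))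
      (by
        intro f g
        apply MulEquiv.ext
        intro v
        obtain ⟨σ, rfl⟩ := QuotientGroup.mk'_surjective I v
        show QuotientGroup.congr I I (cbar ↑(f * g)) (hpresF (f * g)) (QuotientGroup.mk σ)
          = (QuotientGroup.congr I I (cbar ↑f) (hpresF f) *
              QuotientGroup.congr I I (cbar ↑g) (hpresF g)) (QuotientGroup.mk σ)
        rw [MulAut.mul_apply, QuotientGroup.congr_mk, QuotientGroup.congr_mk,
          QuotientGroup.congr_mk, Subgroup.coe_mul, map_mul, MulAut.mul_apply])
    letI : MulAction ↥F (↥T ⧸ I) := MulAction.compHom _ φ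
    have hsmul : ∀ (f : ↥F) (v : ↥T ⧸ I), f • v = φ f v := fun f v => rfl
    have hsmul_mk : ∀ (x : Q) (hx : x ∈ P) (σ : ↥T),
        (⟨QuotientGroup.mk x, Subgroup.mem_map.mpr ⟨x, hx, rfl⟩⟩ : ↥F) •
            (QuotientGroup.mk σ : ↥T ⧸ I)
          = QuotientGroup.mk ((MulAut.conjNormal x : MulAut ↥T) σ) := by
      intro x hx σ
      rw [hsmul]
      show QuotientGroup.congr I I (cbar (QuotientGroup.mk x))
        (hpresF ⟨QuotientGroup.mk x, Subgroup.mem_map.mpr ⟨x, hx, rfl⟩⟩)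
        (QuotientGroup.mk σ) = _
      rw [QuotientGroup.congr_mk]
      have hc : cbar (QuotientGroup.mk x) = MulAut.conjNormal x :=
        QuotientGroup.lift_mk' _ _ x
      rw [hc]
    -- pick t₀ ∈ T \ P
    obtain ⟨t₀, ht₀T, ht₀P⟩ := SetLike.not_le_iff_exists.mp hTP
    set τ₀ : ↥T := ⟨t₀, ht₀T⟩ with hτ₀
    set v₀ : ↥T ⧸ I := QuotientGroup.mk τ₀ with hv₀def
    have hv₀ : v₀ ≠ 1 := by
      rw [hv₀def, Ne, QuotientGroup.eq_one_iff]
      exact fun h => ht₀P h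
    obtain ⟨n₀, hn₀⟩ := hTpg τ₀
    have horbfin : (MulAction.orbit ↥F v₀).Finite := Set.finite_range _
    set W : Subgroup (↥T ⧸ I) := Subgroup.closure (MulAction.orbit ↥F v₀) with hWdef
    have hv₀pow : v₀ ^ p ^ n₀ = 1 := by
      rw [hv₀def]
      show (QuotientGroup.mk' I τ₀) ^ p ^ n₀ = 1
      rw [← map_pow, hn₀, map_one]
    have hWfin : Finite ↥W := by
      have h1 : ∀ s ∈ horbfin.toFinset, s ^ p ^ n₀ = 1 := by
        intro s hs
        rw [Set.Finite.mem_toFinset] at hs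
        obtain ⟨f, rfl⟩ := hs
        show (f • v₀) ^ p ^ n₀ = 1
        rw [hsmul, ← map_pow, hv₀pow, map_one]
      have h2 := finite_closure_of_torsion horbfin.toFinset (p ^ n₀) (pow_pos hp.pos n₀) h1
      rw [Set.Finite.coe_toFinset] at h2
      exact h2
    have hWinv : ∀ (f : ↥F) (w : ↥T ⧸ I), w ∈ W → f • w ∈ W := by
      intro f w hw
      refine Subgroup.closure_induction ?_ ?_ ?_ ?_ hw
      · intro s hs
        obtain ⟨g, rfl⟩ := hs
        rw [smul_smul]
        exact Subgroup.subset_closure (MulAction.mem_orbit v₀ (f * g))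
      · rw [hsmul, map_one]
        exact one_mem W
      · intro a b _ _ ha hb
        rw [hsmul, map_mul]
        exact mul_mem (by rw [← hsmul]; exact ha) (by rw [← hsmul]; exact hb)
      · intro a _ ha
        rw [hsmul, map_inv]
        exact inv_mem (by rw [← hsmul]; exact ha)
    letI actW : MulAction ↥F ↥W :=
      { smul := fun f w => ⟨f • (w : ↥T ⧸ I), hWinv f _ w.2⟩
        one_smul := by
          intro w
          apply Subtype.ext
          show (1 : ↥F) • (w : ↥T ⧸ I) = w
          rw [one_smul]
        mul_smul := by
          intro f g w
          apply Subtype.ext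
          show (f * g) • (w : ↥T ⧸ I) = f • (g • (w : ↥T ⧸ I))
          rw [mul_smul] }
    have hV_p : IsPGroup p (↥T ⧸ I) := hTpg.to_quotient I
    have hW_p : IsPGroup p ↥W := hV_p.to_subgroup W
    have hv₀W : v₀ ∈ W := Subgroup.subset_closure (MulAction.mem_orbit_self v₀)
    haveI : Nontrivial ↥W := by
      refine ⟨⟨v₀, hv₀W⟩, 1, ?_⟩
      intro h
      rw [Subtype.ext_iff] at h
      exact hv₀ h
    have hdvd : p ∣ Nat.card ↥W := by
      rcases hW_p.card_eq_or_dvd with h | h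
      · exact absurd h Finite.one_lt_card.ne'
      · exact h
    have hmod := hFp.card_modEq_card_fixedPoints ↥W
    have hfix1 : (1 : ↥W) ∈ MulAction.fixedPoints ↥F ↥W := by
      intro f
      apply Subtype.ext
      show f • ((1 : ↥W) : ↥T ⧸ I) = ((1 : ↥W) : ↥T ⧸ I)
      rw [OneMemClass.coe_one, hsmul, map_one]
    have hfp_dvd : p ∣ Nat.card (MulAction.fixedPoints ↥F ↥W) :=
      (Nat.modEq_zero_iff_dvd).mp (hmod.symm.trans ((Nat.modEq_zero_iff_dvd).mpr hdvd))
    haveI : Nonempty (MulAction.fixedPoints ↥F ↥W) := ⟨⟨1, hfix1⟩⟩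
    haveI : Nontrivial (MulAction.fixedPoints ↥F ↥W) := by
      rw [← Finite.one_lt_card_iff_nontrivial]
      have hpos : 0 < Nat.card (MulAction.fixedPoints ↥F ↥W) := Nat.card_pos
      have hlep := Nat.le_of_dvd hpos hfp_dvd
      have := hp.two_le
      omega
    obtain ⟨wfix, hwfix⟩ := exists_ne (⟨1, hfix1⟩ : MulAction.fixedPoints ↥F ↥W)
    set v : ↥T ⧸ I := ((wfix : ↥W) : ↥T ⧸ I) with hvdef
    have hvne : v ≠ 1 := by
      intro h
      apply hwfix
      apply Subtype.ext
      apply Subtype.ext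
      show v = ((1 : ↥W) : ↥T ⧸ I)
      rw [h, OneMemClass.coe_one]
    have hvfix : ∀ f : ↥F, f • v = v := fun f =>
      congrArg (fun z : ↥W => (z : ↥T ⧸ I)) (wfix.2 f)
    have hvinvfix : ∀ f : ↥F, f • v⁻¹ = v⁻¹ := by
      intro f
      rw [hsmul, map_inv, ← hsmul, hvfix]
    -- the key normalizing property
    have key : ∀ σ : ↥T,
        (∀ f : ↥F, f • (QuotientGroup.mk σ : ↥T ⧸ I) = QuotientGroup.mk σ) →
        ∀ x ∈ P, ((σ : Q))⁻¹ * x * (σ : Q) ∈ P := by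
      intro σ hσfix x hx
      have hx' : x⁻¹ ∈ P := inv_mem hx
      have hf := hσfix ⟨QuotientGroup.mk x⁻¹, Subgroup.mem_map.mpr ⟨x⁻¹, hx', rfl⟩⟩
      rw [hsmul_mk x⁻¹ hx' σ] at hf
      have hmem0 : ((MulAut.conjNormal (x⁻¹ : Q) : MulAut ↥T) σ)⁻¹ * σ ∈ I :=
        QuotientGroup.eq.mp hf
      have hmem : T.subtype (((MulAut.conjNormal (x⁻¹ : Q) : MulAut ↥T) σ)⁻¹ * σ) ∈ P := hmem0
      have hmem' : (x⁻¹ * (σ : Q) * x)⁻¹ * (σ : Q) ∈ P := by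
        have hcoe : (T.subtype) (((MulAut.conjNormal (x⁻¹ : Q) : MulAut ↥T) σ)⁻¹ * σ)
            = (x⁻¹ * (σ : Q) * (x⁻¹)⁻¹)⁻¹ * (σ : Q) := by
          rw [map_mul, map_inv]
          simp [MulAut.conjNormal_apply]
        rw [hcoe, inv_inv] at hmem
        exact hmem
      have heq : (σ : Q)⁻¹ * x * (σ : Q) = x * ((x⁻¹ * (σ : Q) * x)⁻¹ * (σ : Q)) := by group
      rw [heq]
      exact mul_mem hx hmem'
    obtain ⟨τ, hτ⟩ := QuotientGroup.mk'_surjective I v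
    have hτv : (QuotientGroup.mk τ : ↥T ⧸ I) = v := hτ
    have hτv' : (QuotientGroup.mk τ⁻¹ : ↥T ⧸ I) = v⁻¹ := by
      rw [← hτv]
      exact map_inv (QuotientGroup.mk' I) τ
    set t : Q := (τ : Q) with htdef
    have htP : t ∉ P := by
      intro h
      apply hvne
      rw [← hτv, QuotientGroup.eq_one_iff]
      exact h
    have hA : ∀ x ∈ P, t⁻¹ * x * t ∈ P := by
      intro x hx
      exact key τ (fun f => by rw [hτv]; exact hvfix f) x hx
    have hB : ∀ x ∈ P, t * x * t⁻¹ ∈ P := by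
      intro x hx
      have hB' := key τ⁻¹ (fun f => by rw [hτv']; exact hvinvfix f) x hx
      simpa using hB'
    rw [SetLike.lt_iff_le_and_exists]
    refine ⟨Subgroup.le_normalizer, t, ?_, htP⟩
    rw [Subgroup.mem_normalizer_iff]
    intro h
    constructor
    · intro hh
      exact hB h hh
    · intro hh
      have hmem := hA _ hh
      have heq : t⁻¹ * (t * h * t⁻¹) * t = h := by group
      rwa [heq] at hmem
end

section
/- If D is a normal abelian discrete p-toral subgroup of a virtually discrete p-toral group Γ, then the identity component Γ₀ of Γ centralizes D. -/
open scoped Pointwise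

section AuxProofs

open Multiplicative

/-- The `N`-torsion of `AddCircle (1 : ℚ)` is finite. -/
lemma auxAddCircleTorsionFinite (N : ℕ) (hN : N ≠ 0) :
    {z : AddCircle (1 : ℚ) | N • z = 0}.Finite := by
  haveI : Fact ((0 : ℚ) < 1) := ⟨one_pos⟩
  have hsub : {z : AddCircle (1 : ℚ) | N • z = 0} ⊆
      ⋃ d ∈ (N.divisors : Finset ℕ), {z : AddCircle (1 : ℚ) | addOrderOf z = d} := by
    intro z hz
    have hd : addOrderOf z ∣ N := addOrderOf_dvd_iff_nsmul_eq_zero.2 hz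
    exact Set.mem_biUnion (Nat.mem_divisors.2 ⟨hd, hN⟩) rfl
  exact Set.Finite.subset (Set.Finite.biUnion (Finset.finite_toSet _)
    (fun d hd => AddCircle.finite_setOfPred_addOrderOf_eq (1 : ℚ)
      (Nat.pos_of_mem_divisors hd))) hsub

lemma auxPruferTorsionFinite (p n : ℕ) (hp : p ≠ 0) :
    Finite {z : ↥(Prufer p) // (p ^ n) • z = 0} := by
  haveI : Finite {w : AddCircle (1 : ℚ) // (p ^ n) • w = 0} :=
    (auxAddCircleTorsionFinite (p ^ n) (pow_ne_zero _ hp)).to_subtype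
  refine Finite.of_injective
    (fun z => (⟨z.1.1, ?_⟩ : {w : AddCircle (1 : ℚ) // (p ^ n) • w = 0})) ?_
  · exact_mod_cast z.2
  · intro a b hab
    exact Subtype.ext (Subtype.ext (congrArg (fun w : {w : AddCircle (1 : ℚ) // (p ^ n) • w = 0} => w.1) hab))

lemma auxPruferDiv (p : ℕ) (hp : p ≠ 0) (z : ↥(Prufer p)) :
    ∃ y : ↥(Prufer p), p • y = z := by
  haveI : Fact ((0 : ℚ) < 1) := ⟨one_pos⟩
  obtain ⟨m, hm⟩ := z.2
  set y₀ : AddCircle (1 : ℚ) := DivisibleBy.div z.1 (p : ℤ) with hy₀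
  have hpy : (p : ℕ) • y₀ = z.1 := by
    have := DivisibleBy.div_cancel z.1 (by exact_mod_cast hp : (p : ℤ) ≠ 0)
    rw [← natCast_zsmul]
    exact this
  have hy₀mem : y₀ ∈ Prufer p := by
    refine ⟨m + 1, ?_⟩
    calc (p ^ (m + 1) : ℕ) • y₀ = (p ^ m * p : ℕ) • y₀ := by rw [pow_succ]
    _ = (p ^ m : ℕ) • ((p : ℕ) • y₀) := mul_smul _ _ _
    _ = (p ^ m : ℕ) • z.1 := by rw [hpy]
    _ = 0 := hm
  refine ⟨⟨y₀, hy₀mem⟩, Subtype.ext ?_⟩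
  simpa using hpy

lemma auxFnDiv (p r : ℕ) (hp : p ≠ 0) (f : Fin r → ↥(Prufer p)) :
    ∃ g : Fin r → ↥(Prufer p), p • g = f := by
  choose g hg using fun i => auxPruferDiv p hp (f i)
  exact ⟨g, funext fun i => hg i⟩

lemma auxFnTor (p r : ℕ) (f : Fin r → ↥(Prufer p)) :
    ∃ n : ℕ, (p ^ n) • f = 0 := by
  choose g hg using fun i => (f i).2
  refine ⟨Finset.univ.sup g, funext fun i => ?_⟩
  have h1 : g i ≤ Finset.univ.sup g := Finset.le_sup (Finset.mem_univ i)
  obtain ⟨c, hc⟩ := Nat.exists_eq_add_of_le h1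
  have hval : (p ^ Finset.univ.sup g) • (f i).1 = 0 := by
    calc (p ^ Finset.univ.sup g) • (f i).1 = (p ^ c * p ^ g i) • (f i).1 := by
          rw [hc, pow_add, mul_comm]
    _ = (p ^ c) • ((p ^ g i) • (f i).1) := mul_smul _ _ _
    _ = 0 := by rw [hg i, smul_zero]
  exact Subtype.ext (by simpa using hval)

lemma auxTorusTor {p : ℕ} {T : Type*} [Group T] (h : IsPTorus p T) (t : T) :
    ∃ n : ℕ, t ^ p ^ n = 1 := by
  obtain ⟨r, ⟨e⟩⟩ := h
  obtain ⟨n, hn⟩ := auxFnTor p r (Multiplicative.toAdd (e t))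
  refine ⟨n, e.injective ?_⟩
  rw [map_pow, map_one]
  apply Multiplicative.toAdd.injective
  rw [toAdd_pow, hn, toAdd_one]

lemma auxTorusDiv {p : ℕ} (hp : p ≠ 0) {T : Type*} [Group T] (h : IsPTorus p T) (t : T) :
    ∃ s : T, s ^ p = t := by
  obtain ⟨r, ⟨e⟩⟩ := h
  obtain ⟨g, hg⟩ := auxFnDiv p r hp (Multiplicative.toAdd (e t))
  refine ⟨e.symm (Multiplicative.ofAdd g), e.injective ?_⟩
  rw [map_pow, MulEquiv.apply_symm_apply]
  apply Multiplicative.toAdd.injective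
  rw [toAdd_pow, toAdd_ofAdd, hg]

lemma auxTorusDivPow {p : ℕ} (hp : p ≠ 0) {T : Type*} [Group T] (h : IsPTorus p T)
    (t : T) (k : ℕ) : ∃ s : T, s ^ p ^ k = t := by
  induction k with
  | zero => exact ⟨t, by simp⟩
  | succ k ih =>
    obtain ⟨s, hs⟩ := ih
    obtain ⟨s', hs'⟩ := auxTorusDiv hp h s
    refine ⟨s', ?_⟩
    rw [pow_succ', pow_mul, hs', hs]

lemma auxDPTTor {p : ℕ} (hp : p ≠ 0) {G : Type*} [Group G] (h : IsDiscretePToral p G)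
    (g : G) : ∃ n : ℕ, g ^ p ^ n = 1 := by
  obtain ⟨T, hTn, hTt, k, hk⟩ := h
  haveI : Finite (G ⧸ T) :=
    Nat.finite_of_card_ne_zero (by rw [hk]; exact pow_ne_zero _ hp)
  have h1 : ((g : G ⧸ T) : G ⧸ T) ^ p ^ k = 1 := by
    rw [← hk]; exact pow_card_eq_one'
  have h2 : g ^ p ^ k ∈ T := by
    rw [← QuotientGroup.eq_one_iff]
    rw [← h1]
    exact (QuotientGroup.mk' T).map_pow g (p ^ k)
  obtain ⟨m, hm⟩ := auxTorusTor hTt (⟨g ^ p ^ k, h2⟩ : T)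
  refine ⟨k + m, ?_⟩
  have h3 : (g ^ p ^ k) ^ p ^ m = 1 := by
    have := congrArg Subtype.val hm
    simpa using this
  rw [pow_add, pow_mul]
  exact h3

lemma auxDPTTorsionFinite {p : ℕ} (hp : p ≠ 0) {G : Type*} [CommGroup G]
    (h : IsDiscretePToral p G) (n : ℕ) : Finite (Omega p n G) := by
  obtain ⟨T, hTn, ⟨r, ⟨e⟩⟩, k, hk⟩ := h
  haveI : Finite (G ⧸ T) :=
    Nat.finite_of_card_ne_zero (by rw [hk]; exact pow_ne_zero _ hp)
  haveI : T.FiniteIndex := ⟨Subgroup.index_ne_zero_of_finite⟩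
  set Ω := Omega p n G with hΩ
  haveI hTfin : Finite {y : ↥T // y ^ p ^ n = 1} := by
    haveI : Finite {f : Fin r → ↥(Prufer p) // (p ^ n) • f = 0} := by
      haveI : Finite {z : ↥(Prufer p) // (p ^ n) • z = 0} := auxPruferTorsionFinite p n hp
      refine Finite.of_injective (fun f =>
        (fun i => (⟨f.1 i,
          congrArg (fun h => h i) f.2⟩ : {z : ↥(Prufer p) // (p ^ n) • z = 0}))) ?_
      intro f g hfg
      exact Subtype.ext (funext fun i => congrArg Subtype.val (congrFun hfg i))
    refine Finite.of_injective (fun y =>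
      (⟨Multiplicative.toAdd (e y.1), ?_⟩ : {f : Fin r → ↥(Prufer p) // (p ^ n) • f = 0})) ?_
    · have h1 : (e y.1) ^ p ^ n = 1 := by rw [← map_pow, y.2, map_one]
      have := congrArg Multiplicative.toAdd h1
      rwa [toAdd_pow, toAdd_one] at this
    · intro a b hab
      exact Subtype.ext (e.injective (Multiplicative.toAdd.injective
        (congrArg Subtype.val hab)))
  haveI hHfin : Finite (T.subgroupOf Ω) := by
    refine Finite.of_injective (fun x =>
      (⟨⟨x.1.1, x.2⟩, ?_⟩ : {y : ↥T // y ^ p ^ n = 1})) ?_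
    · apply Subtype.ext
      have hx : (x.1.1 : G) ^ p ^ n = 1 := x.1.2
      simpa using hx
    · intro a b hab
      exact Subtype.ext (Subtype.ext (congrArg (fun w : {y : ↥T // y ^ p ^ n = 1} => w.1.1) hab))
  haveI : Finite (↥Ω ⧸ T.subgroupOf Ω) := by
    haveI : (T.subgroupOf Ω).FiniteIndex := Subgroup.instFiniteIndex_subgroupOf T Ω
    exact Nat.finite_of_card_ne_zero Subgroup.FiniteIndex.index_ne_zero
  exact Finite.of_subgroup_quotient (T.subgroupOf Ω)

end AuxProofs

/-- If `D` is a normal abelian discrete `p`-toral subgroup of a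
virtually discrete `p`-toral group `Γ`, then the identity component `Γ₀`
centralizes `D`. -/
theorem identityComponent_le_centralizer (p : ℕ) (hp : p.Prime) {Γ : Type*} [Group Γ]
    (hΓ : IsVirtuallyDiscretePToral p Γ) (D : Subgroup Γ) (hN : D.Normal)
    (hab : ∀ x ∈ D, ∀ y ∈ D, x * y = y * x) (hD : IsDiscretePToral p ↥D) :
    identityComponent p Γ ≤ Subgroup.centralizer (D : Set Γ) := by
  refine iSup₂_le fun T hT => ?_
  intro t ht
  rw [Subgroup.mem_centralizer_iff]
  intro d hd
  letI : CommGroup ↥D :=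
    { (inferInstance : Group ↥D) with
      mul_comm := fun a b => Subtype.ext (hab a.1 a.2 b.1 b.2) }
  obtain ⟨n, hdn⟩ := auxDPTTor hp.ne_zero hD (⟨d, hd⟩ : ↥D)
  set Ω : Subgroup ↥D := Omega p n ↥D with hΩdef
  haveI hΩfin : Finite ↥Ω := auxDPTTorsionFinite hp.ne_zero hD n
  -- conjugation action of Γ on Ω
  have hmemΩ : ∀ (g : Γ) (y : ↥Ω), (⟨g * ((y : ↥D) : Γ) * g⁻¹, hN.conj_mem _ (y : ↥D).2 g⟩ : ↥D) ∈ Ω := by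
    intro g y
    show (⟨g * ((y : ↥D) : Γ) * g⁻¹, _⟩ : ↥D) ^ p ^ n = 1
    apply Subtype.ext
    have hy : ((y : ↥D) : Γ) ^ p ^ n = 1 := by
      have hmem : (y : ↥D) ^ p ^ n = 1 := y.2
      have := congrArg Subtype.val hmem
      simpa using this
    show (g * ((y : ↥D) : Γ) * g⁻¹) ^ p ^ n = 1
    rw [conj_pow, hy, mul_one, mul_inv_cancel]
  let c : Γ → ↥Ω → ↥Ω := fun g y =>
    ⟨⟨g * ((y : ↥D) : Γ) * g⁻¹, hN.conj_mem _ (y : ↥D).2 g⟩, hmemΩ g y⟩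
  have hc_mul : ∀ (g h : Γ) (y : ↥Ω), c (g * h) y = c g (c h y) := by
    intro g h y
    apply Subtype.ext; apply Subtype.ext
    show (g * h) * ((y : ↥D) : Γ) * (g * h)⁻¹ = g * (h * ((y : ↥D) : Γ) * h⁻¹) * g⁻¹
    group
  have hc_one : ∀ y, c 1 y = y := by
    intro y
    apply Subtype.ext; apply Subtype.ext
    show 1 * ((y : ↥D) : Γ) * 1⁻¹ = ((y : ↥D) : Γ)
    group
  let σ : Γ →* Equiv.Perm ↥Ω :=
    { toFun := fun g =>
        { toFun := c g
          invFun := c g⁻¹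
          left_inv := fun y => by rw [← hc_mul, inv_mul_cancel, hc_one]
          right_inv := fun y => by rw [← hc_mul, mul_inv_cancel, hc_one] }
      map_one' := Equiv.ext fun y => hc_one y
      map_mul' := fun g h => Equiv.ext fun y => hc_mul g h y }
  -- the element t is a p ^ M-th power inside the torus T
  set M := Nat.card (Equiv.Perm ↥Ω) with hM
  obtain ⟨s, hs⟩ := auxTorusDivPow hp.ne_zero hT (⟨t, ht⟩ : ↥T) M
  obtain ⟨c0, hc0⟩ := auxTorusTor hT s
  have hs1M : (s : Γ) ^ p ^ M = t := by
    have := congrArg Subtype.val hs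
    simpa using this
  have hs1c0 : (s : Γ) ^ p ^ c0 = 1 := by
    have := congrArg Subtype.val hc0
    simpa using this
  have hσs_pow : (σ (s : Γ)) ^ p ^ c0 = 1 := by
    rw [← map_pow, hs1c0, map_one]
  have hord : orderOf (σ (s : Γ)) ∣ p ^ c0 := orderOf_dvd_iff_pow_eq_one.2 hσs_pow
  obtain ⟨b, hb, hbe⟩ := (Nat.dvd_prime_pow hp).1 hord
  have hle : orderOf (σ (s : Γ)) ≤ M := by
    refine Nat.le_of_dvd Nat.card_pos ?_
    exact orderOf_dvd_iff_pow_eq_one.2 pow_card_eq_one'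
  have hbM : b ≤ M := by
    have h1 : p ^ b ≤ M := hbe ▸ hle
    have h2 : M < p ^ M := Nat.lt_pow_self hp.one_lt
    have h3 : p ^ b < p ^ M := lt_of_le_of_lt h1 h2
    exact le_of_lt ((Nat.pow_lt_pow_iff_right hp.one_lt).1 h3)
  have hσsM : (σ (s : Γ)) ^ p ^ M = 1 := by
    have hdvd : orderOf (σ (s : Γ)) ∣ p ^ M := hbe ▸ pow_dvd_pow p hbM
    exact orderOf_dvd_iff_pow_eq_one.1 hdvd
  have hσt : σ t = 1 := by
    rw [← hs1M, map_pow, hσsM]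
  have hdΩ : (⟨d, hd⟩ : ↥D) ∈ Ω := hdn
  have happ : σ t ⟨⟨d, hd⟩, hdΩ⟩ = ⟨⟨d, hd⟩, hdΩ⟩ := by rw [hσt]; rfl
  have hconj : t * d * t⁻¹ = d := congrArg (fun y : ↥Ω => ((y : ↥D) : Γ)) happ
  exact (mul_inv_eq_iff_eq_mul.mp hconj).symm
end

section
/- Let A be a finite group acting on an abelian discrete p-toral group V. Then there exists N > 0 such that for all n ≥ N: (a) V = V₀ · Ω_n(V), where V₀ is the maximal divisible subgroup of V; and (b) the pointwise stabilizer of V in A equals the pointwise stabilizer of Ω_n(V) in A. -/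
open scoped Pointwise

-- divisibility of the Prufer group
theorem prufer_div (p : ℕ) (hp : p.Prime) (x : Prufer p) (n : ℕ) (hn : n ≠ 0) :
    ∃ y : Prufer p, n • y = x := by
  obtain ⟨x, s, hs⟩ := x
  -- write n = p^a * m
  set a := n.factorization p with ha
  set m := n / p ^ a with hm
  have hnm : p ^ a * m = n := Nat.ordProj_mul_ordCompl_eq_self n p
  have hcop : (p ^ (s + a + 1)).Coprime m :=
    Nat.Coprime.pow_left _ (Nat.coprime_ordCompl hp hn)
  -- lift x to ℚ and divide by p^a
  obtain ⟨q, hq⟩ := QuotientAddGroup.mk_surjective x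
  set z : AddCircle (1 : ℚ) := (↑(q / (p ^ a : ℚ)) : AddCircle (1:ℚ)) with hz
  have hpa0 : (p : ℚ) ^ a ≠ 0 := pow_ne_zero _ (by exact_mod_cast hp.ne_zero)
  have hpaz : (p ^ a : ℕ) • z = x := by
    rw [hz, ← hq, ← QuotientAddGroup.mk_nsmul]
    congr 1
    rw [nsmul_eq_mul, Nat.cast_pow]
    field_simp
  have hzt : (p ^ (s + a) : ℕ) • z = 0 := by
    rw [show s + a = a + s by omega, pow_add, mul_nsmul, hpaz, hs]
  -- inverse of m mod p^(s+a+1)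
  have h1lt : 1 < p ^ (s + a + 1) := by
    apply Nat.one_lt_pow (by omega) hp.one_lt
  obtain ⟨m', -, hm'⟩ := Nat.exists_mul_mod_eq_one_of_coprime hcop.symm h1lt
  refine ⟨⟨m' • z, s + a, by rw [smul_comm, hzt, smul_zero]⟩, ?_⟩
  apply Subtype.ext
  show n • (m' • z) = x
  have key : m * m' = p ^ (s + a + 1) * (m * m' / p ^ (s + a + 1)) + 1 := by
    conv_lhs => rw [← Nat.div_add_mod (m * m') (p ^ (s + a + 1))]
    rw [hm']
  have : n • (m' • z) = (p ^ a * (m * m')) • z := by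
    rw [← smul_smul, ← hnm, mul_smul, mul_smul, smul_comm]
  rw [this, key, mul_add, mul_one, add_smul, hpaz]
  have : p ^ a * (p ^ (s + a + 1) * (m * m' / p ^ (s + a + 1))) =
      (p ^ (a + 1) * (m * m' / p ^ (s + a + 1))) * p ^ (s + a) := by ring
  rw [this, mul_smul, hzt, smul_zero, zero_add]

theorem prufer_torsion (p : ℕ) (x : Prufer p) : ∃ s : ℕ, (p ^ s : ℕ) • x = 0 := by
  obtain ⟨s, hs⟩ := x.2
  exact ⟨s, Subtype.ext hs⟩

theorem torus_div (p : ℕ) (hp : p.Prime) (r : ℕ)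
    (x : Multiplicative (Fin r → Prufer p)) (n : ℕ) (hn : n ≠ 0) :
    ∃ y : Multiplicative (Fin r → Prufer p), y ^ n = x := by
  have h : ∀ i : Fin r, ∃ y : Prufer p, n • y = x.toAdd i :=
    fun i => prufer_div p hp (x.toAdd i) n hn
  choose f hf using h
  refine ⟨Multiplicative.ofAdd f, ?_⟩
  apply Multiplicative.toAdd.injective
  show n • f = x.toAdd
  funext i
  exact hf i

theorem torus_torsion (p : ℕ) (r : ℕ) (x : Multiplicative (Fin r → Prufer p)) :
    ∃ s : ℕ, x ^ p ^ s = 1 := by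
  have h : ∀ i : Fin r, ∃ s : ℕ, (p ^ s : ℕ) • x.toAdd i = 0 :=
    fun i => prufer_torsion p (x.toAdd i)
  choose t ht using h
  refine ⟨Finset.univ.sup t, ?_⟩
  apply Multiplicative.toAdd.injective
  show (p ^ Finset.univ.sup t : ℕ) • x.toAdd = 0
  funext i
  show (p ^ Finset.univ.sup t : ℕ) • x.toAdd i = 0
  have hle : t i ≤ Finset.univ.sup t := Finset.le_sup (Finset.mem_univ i)
  rw [show Finset.univ.sup t = (Finset.univ.sup t - t i) + t i by omega, pow_add,
    mul_smul, ht, smul_zero]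

theorem antitone_nat_eventually_const (f : ℕ → ℕ) (hf : ∀ m n, m ≤ n → f n ≤ f m) :
    ∃ N, ∀ n ≥ N, f n = f N := by
  obtain ⟨N, hN⟩ : sInf (Set.range f) ∈ Set.range f :=
    Nat.sInf_mem (Set.range_nonempty f)
  refine ⟨N, fun n hn => ?_⟩
  have h1 : f n ≤ f N := hf N n hn
  have h2 : f N ≤ f n := hN ▸ Nat.sInf_le (Set.mem_range_self n)
  omega

/-- If a finite group `A` acts on an abelian discrete `p`-toral group
`V`, then for all sufficiently large `n`: (a) `V = V₀ · Ω_n(V)` where `V₀` is the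
maximal divisible subgroup; (b) the pointwise stabilizer in `A` of `V` equals that of
`Ω_n(V)`. -/
theorem exists_omega_generates_and_same_kernel (p : ℕ) (hp : p.Prime)
    (A V : Type*) [Group A] [Finite A] [CommGroup V] [MulDistribMulAction A V]
    (hV : IsDiscretePToral p V) (V₀ : Subgroup V) (hV₀ : IsMaxDivisible V₀) :
    ∃ N : ℕ, 0 < N ∧ ∀ n ≥ N,
      ((V₀ : Set V) * (Omega p n V : Set V) = Set.univ) ∧
      (∀ a : A, (∀ v ∈ Omega p n V, a • v = v) ↔ ∀ v : V, a • v = v) := by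
  obtain ⟨T, hTnorm, ⟨r, ⟨e⟩⟩, k, hk⟩ := hV
  have hp0 : p ≠ 0 := hp.ne_zero
  -- T is contained in V₀
  have hTV₀ : T ≤ V₀ := by
    apply hV₀.2
    intro x hx n hn
    obtain ⟨y, hy⟩ := torus_div p hp r (e ⟨x, hx⟩) n hn
    refine ⟨((e.symm y : T) : V), (e.symm y).2, ?_⟩
    have : (e.symm y) ^ n = ⟨x, hx⟩ := by
      apply e.injective
      rw [map_pow, MulEquiv.apply_symm_apply, hy]
    calc ((e.symm y : T) : V) ^ n = (((e.symm y) ^ n : T) : V) := by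
          rw [SubmonoidClass.coe_pow]
      _ = x := by rw [this]
  -- every v^(p^k) lies in T
  have hpowT : ∀ v : V, v ^ p ^ k ∈ T := by
    intro v
    have : ((v : V ⧸ T)) ^ p ^ k = 1 := by
      rw [← hk]; exact pow_card_eq_one'
    rwa [← QuotientGroup.mk_pow, QuotientGroup.eq_one_iff] at this
  -- every element of V is p-power torsion
  have htors : ∀ v : V, ∃ m : ℕ, v ^ p ^ m = 1 := by
    intro v
    obtain ⟨s, hs⟩ := torus_torsion p r (e ⟨v ^ p ^ k, hpowT v⟩)
    refine ⟨k + s, ?_⟩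
    have h1 : (⟨v ^ p ^ k, hpowT v⟩ : T) ^ p ^ s = 1 := by
      apply e.injective
      rw [map_pow, hs, map_one]
    have h2 : (v ^ p ^ k) ^ p ^ s = 1 := by
      have := congrArg (Subtype.val) h1
      simpa using this
    rw [pow_add, pow_mul]
    exact h2
  -- Omega is monotone
  have hOmega : ∀ m n : ℕ, m ≤ n → Omega p m V ≤ Omega p n V := by
    intro m n hmn x hx
    have hx : x ^ p ^ m = 1 := hx
    show x ^ p ^ n = 1
    rw [show n = m + (n - m) by omega, pow_add, pow_mul, hx, one_pow]
  -- the fixed-point sets stabilize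
  set S : ℕ → Set A := fun n => {a | ∀ v ∈ Omega p n V, a • v = v} with hS
  have hSanti : ∀ m n : ℕ, m ≤ n → S n ⊆ S m := by
    intro m n hmn a ha v hv
    exact ha v (hOmega m n hmn hv)
  obtain ⟨N₁, hN₁⟩ := antitone_nat_eventually_const (fun n => (S n).ncard)
    (fun m n hmn => Set.ncard_le_ncard (hSanti m n hmn) (Set.toFinite _))
  have hSeq : ∀ n ≥ N₁, S n = S N₁ := by
    intro n hn
    exact Set.eq_of_subset_of_ncard_le (hSanti N₁ n hn) (ge_of_eq (hN₁ n hn))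
      (Set.toFinite _)
  refine ⟨N₁ + k + 1, by omega, fun n hn => ⟨?_, ?_⟩⟩
  · -- part (a)
    rw [Set.eq_univ_iff_forall]
    intro v
    have hvV₀ : v ^ p ^ n ∈ V₀ := by
      have : v ^ p ^ n = (v ^ p ^ k) ^ p ^ (n - k) := by
        rw [← pow_mul, ← pow_add, show k + (n - k) = n by omega]
      rw [this]
      exact pow_mem (hTV₀ (hpowT v)) _
    obtain ⟨v₀, hv₀, hv₀pow⟩ := hV₀.1 _ hvV₀ (p ^ n) (pow_ne_zero _ hp0)
    have hw : v₀⁻¹ * v ∈ Omega p n V := by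
      show (v₀⁻¹ * v) ^ p ^ n = 1
      rw [mul_pow, inv_pow, hv₀pow, inv_mul_cancel]
    exact Set.mem_mul.mpr ⟨v₀, hv₀, v₀⁻¹ * v, hw, by group⟩
  · -- part (b)
    intro a
    constructor
    · intro ha v
      obtain ⟨m, hm⟩ := htors v
      have hvm : v ∈ Omega p (max n m) V := hOmega m _ (le_max_right _ _) hm
      have haS : a ∈ S n := ha
      have : a ∈ S (max n m) := by
        rw [hSeq (max n m) (le_trans (by omega) (le_max_left n m)),
          ← hSeq n (by omega)]
        exact haS
      exact this v hvm
    · intro ha v _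
      exact ha v
end

section
/- Let p be an odd prime and let A be a finite p-group acting quadratically on an elementary abelian p-group V (i.e., [V,A,A] = 1). Then for every proper subgroup A₀ < A, the norm map N_{A₀}^A : C_V(A₀) → C_V(A) is identically 1. -/
open scoped Pointwise

/-- Let `p` be odd and `A` a finite `p`-group acting quadratically on
an elementary abelian `p`-group `V`.  Then for every proper subgroup `A₀ < A` the norm
map `N_{A₀}^A` is identically `1` on `C_V(A₀)`. -/
theorem norm_eq_one_of_quadratic_odd (p : ℕ) (hp : p.Prime) (hodd : Odd p)
    {A V : Type*} [Group A] [Finite A] [CommGroup V] [MulDistribMulAction A V]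
    (hA : IsPGroup p A) (helem : ∀ v : V, v ^ p = 1)
    (hquad : actComm A Set.univ (actComm A Set.univ (⊤ : Subgroup V)) = ⊥)
    (A₀ : Subgroup A) (hA₀ : A₀ ≠ ⊤)
    (R : Finset A) (hR : IsRelTransversal A₀ ⊤ R)
    (v : V) (hv : ∀ a ∈ A₀, a • v = v) :
    ∏ r ∈ R, r • v = 1 := by
  classical
  set φ : A → V := fun a => v⁻¹ * a • v with hφdef
  -- A fixes all values of φ (quadratic action)
  have hfix : ∀ a b : A, a • φ b = φ b := by
    intro a b
    have h1 : φ b ∈ actComm A Set.univ (⊤ : Subgroup V) :=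
      Subgroup.subset_closure ⟨v, Subgroup.mem_top v, b, Set.mem_univ b, rfl⟩
    have h2 : (φ b)⁻¹ * a • φ b ∈
        actComm A Set.univ (actComm A Set.univ (⊤ : Subgroup V)) :=
      Subgroup.subset_closure ⟨φ b, h1, a, Set.mem_univ a, rfl⟩
    rw [hquad, Subgroup.mem_bot] at h2
    exact (inv_mul_eq_one.mp h2).symm
  -- φ is a homomorphism
  have hhom : ∀ a b : A, φ (a * b) = φ a * φ b := by
    intro a b
    have hb : b • v = v * φ b := by simp [hφdef]
    have : (a * b) • v = (a • v) * φ b := by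
      rw [mul_smul, hb, smul_mul', hfix a b]
    simp only [hφdef, this, mul_assoc]
  let φ' : A →* V := MonoidHom.mk' φ hhom
  have hA₀1 : ∀ a ∈ A₀, φ a = 1 := by
    intro a ha; simp [hφdef, hv a ha]
  set K : Subgroup A := φ'.ker with hKdef
  have hA₀K : A₀ ≤ K := fun a ha => by
    simp [hKdef, MonoidHom.mem_ker]; exact hA₀1 a ha
  let φh : A ⧸ K →* V := QuotientGroup.lift K φ' (fun x hx => hx)
  have hφh : ∀ a : A, φh (↑a) = φ a := fun a => rfl
  -- the representative function
  have hRrep : ∀ g : A, ∃! r, r ∈ R ∧ r⁻¹ * g ∈ A₀ := fun g => hR.2 g (Subgroup.mem_top g)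
  let rep : A → A := fun g => (hRrep g).exists.choose
  have hrep1 : ∀ g, rep g ∈ R ∧ (rep g)⁻¹ * g ∈ A₀ := fun g => (hRrep g).exists.choose_spec
  have hrepu : ∀ g r, r ∈ R → r⁻¹ * g ∈ A₀ → r = rep g := fun g r hr h =>
    (hRrep g).unique ⟨hr, h⟩ (hrep1 g)
  have hrepR : ∀ r ∈ R, rep r = r := by
    intro r hr
    exact ((hRrep r).unique (hrep1 r) ⟨hr, by rw [inv_mul_cancel]; exact one_mem A₀⟩)
  have hrepmul : ∀ g a, a ∈ A₀ → rep (g * a) = rep g := by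
    intro g a ha
    refine (hrepu (g * a) (rep g) (hrep1 g).1 ?_).symm
    rw [← mul_assoc]
    exact mul_mem (hrep1 g).2 ha
  let π : A → A ⧸ K := QuotientGroup.mk
  have hπmul : ∀ a b : A, π (a * b) = π a * π b := fun a b => rfl
  have hπrep : ∀ g : A, π (rep g) = π g := by
    intro g
    exact (QuotientGroup.eq).mpr (hA₀K (hrep1 g).2)
  haveI : Fintype (A ⧸ K) := Fintype.ofFinite _
  -- fibers of R over A ⧸ K all have the same cardinality
  set n := (R.filter fun r => π r = (1 : A ⧸ K)).card with hndef
  have hfib : ∀ c : A ⧸ K, (R.filter fun r => π r = c).card = n := by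
    intro c
    refine QuotientGroup.induction_on c ?_
    intro g
    refine Finset.card_bij (fun r _ => rep (g⁻¹ * r)) ?_ ?_ ?_
    · intro r hr
      rw [Finset.mem_filter] at hr ⊢
      refine ⟨(hrep1 _).1, ?_⟩
      have : π (g⁻¹ * r) = (π g)⁻¹ * π r := rfl
      rw [hπrep, this, hr.2]
      exact inv_mul_cancel _
    · intro r₁ h₁ r₂ h₂ hEq
      rw [Finset.mem_filter] at h₁ h₂
      have e : r₁⁻¹ * r₂ =
          ((rep (g⁻¹ * r₁))⁻¹ * (g⁻¹ * r₁))⁻¹ * ((rep (g⁻¹ * r₂))⁻¹ * (g⁻¹ * r₂)) := by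
        rw [← hEq]; group
      have hmem : r₁⁻¹ * r₂ ∈ A₀ := by
        rw [e]; exact mul_mem (inv_mem (hrep1 _).2) (hrep1 _).2
      rw [hrepu r₂ r₁ h₁.1 hmem, hrepR r₂ h₂.1]
    · intro s hs
      rw [Finset.mem_filter] at hs
      refine ⟨rep (g * s), ?_, ?_⟩
      · rw [Finset.mem_filter]
        refine ⟨(hrep1 _).1, ?_⟩
        have : π (g * s) = π g * π s := rfl
        rw [hπrep, this, hs.2, mul_one]
      · show rep (g⁻¹ * rep (g * s)) = s
        have ha := (hrep1 (g * s)).2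
        have e2 : g⁻¹ * rep (g * s) = s * ((rep (g * s))⁻¹ * (g * s))⁻¹ := by group
        rw [e2, hrepmul s _ (inv_mem ha), hrepR s hs.1]
  -- the total product over A ⧸ K is 1
  set T : V := ∏ c : A ⧸ K, φh c with hTdef
  have hTinv : T⁻¹ = T := by
    rw [hTdef, ← Finset.prod_inv_distrib]
    calc ∏ c : A ⧸ K, (φh c)⁻¹ = ∏ c : A ⧸ K, φh c⁻¹ := by simp
    _ = ∏ c : A ⧸ K, φh c := Fintype.prod_equiv (Equiv.inv _) _ _ (fun c => rfl)
  have hT2 : T * T = 1 := by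
    nth_rewrite 1 [← hTinv]; exact inv_mul_cancel T
  have hT : T = 1 := by
    obtain ⟨k, hk⟩ := hodd
    have hp1 : T ^ p = 1 := helem T
    rw [hk, pow_succ, pow_mul, pow_two, hT2, one_pow, one_mul] at hp1
    exact hp1
  -- the product over R of φ equals T ^ n
  have hS : ∏ r ∈ R, φ r = 1 := by
    rw [← Finset.prod_fiberwise R π φ]
    have : ∀ c : A ⧸ K, (∏ r ∈ R.filter (fun r => π r = c), φ r) = φh c ^ n := by
      intro c
      rw [← hfib c, ← Finset.prod_const]
      refine Finset.prod_congr rfl ?_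
      intro r hr
      rw [Finset.mem_filter] at hr
      rw [← hr.2]
      exact (hφh r).symm
    rw [Finset.prod_congr rfl (fun c _ => this c), Finset.prod_pow, ← hTdef, hT, one_pow]
  -- R.card is divisible by p
  have hcard : R.card = A₀.index := by
    haveI : Fintype (A ⧸ A₀) := Fintype.ofFinite _
    rw [Subgroup.index, Nat.card_eq_fintype_card, ← Finset.card_univ]
    refine Finset.card_bij (fun r _ => ((r : A) : A ⧸ A₀)) (fun _ _ => Finset.mem_univ _)
      ?_ ?_
    · intro r₁ h₁ r₂ h₂ hEq
      have hmem : r₁⁻¹ * r₂ ∈ A₀ := (QuotientGroup.eq).mp hEq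
      rw [hrepu r₂ r₁ h₁ hmem, hrepR r₂ h₂]
    · intro c _
      refine QuotientGroup.induction_on c ?_
      intro g
      exact ⟨rep g, (hrep1 g).1, (QuotientGroup.eq).mpr (hrep1 g).2⟩
  have hpdvd : p ∣ R.card := by
    rw [hcard]
    haveI : Fact p.Prime := ⟨hp⟩
    obtain ⟨m, hm⟩ := IsPGroup.iff_card.mp hA
    obtain ⟨j, hj, hje⟩ := (Nat.dvd_prime_pow hp).mp (hm ▸ A₀.index_dvd_card)
    rcases Nat.eq_zero_or_pos j with hj0 | hj0
    · exfalso
      rw [hj0, pow_zero] at hje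
      exact hA₀ (Subgroup.index_eq_one.mp hje)
    · rw [hje]
      exact dvd_pow_self p hj0.ne'
  -- conclude
  have hstep : ∀ r : A, r • v = v * φ r := by
    intro r; simp [hφdef]
  calc ∏ r ∈ R, r • v = ∏ r ∈ R, (v * φ r) := Finset.prod_congr rfl (fun r _ => hstep r)
  _ = v ^ R.card * ∏ r ∈ R, φ r := by rw [Finset.prod_mul_distrib, Finset.prod_const]
  _ = 1 := by
      obtain ⟨t, ht⟩ := hpdvd
      rw [hS, mul_one, ht, pow_mul, helem, one_pow]
end

section
/- Let A be a finite 2-group acting quadratically on an elementary abelian 2-group V (i.e., [V,A,A]=1), and let A₀ ≤ A be a subgroup of index at least 4. Then the norm map N_{A₀}^A is identically 1 on C_V(A₀). -/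
open scoped Pointwise

lemma pow_eq_one_of_sq_eq_one' {M : Type*} [Monoid M] {x : M} (hx : x ^ 2 = 1)
    {n : ℕ} (hn : 2 ∣ n) : x ^ n = 1 := by
  obtain ⟨k, rfl⟩ := hn
  rw [pow_mul, hx, one_pow]

lemma prod_hom_eq_one_of_sq {Q V : Type*} [Group Q] [Fintype Q] [CommGroup V]
    (φ : Q →* V) (hsq : ∀ q : Q, q ^ 2 = 1) (h4 : 4 ∣ Nat.card Q) :
    ∏ q : Q, φ q = 1 := by
  classical
  have hpos : 0 < Nat.card Q := Nat.card_pos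
  have hcard : 1 < Fintype.card Q := by
    rw [← Nat.card_eq_fintype_card]; omega
  obtain ⟨a, ha⟩ := Fintype.exists_ne_of_one_lt_card hcard (1 : Q)
  have ha2 : a * a = 1 := by rw [← pow_two]; exact hsq a
  have hainv : a⁻¹ = a := inv_eq_of_mul_eq_one_right ha2
  let H : Subgroup Q :=
    { carrier := {1, a}
      one_mem' := Or.inl rfl
      mul_mem' := by
        intro x y hx hy
        simp only [Set.mem_insert_iff, Set.mem_singleton_iff] at *
        rcases hx with rfl | rfl <;> rcases hy with rfl | rfl <;> simp [ha2]
      inv_mem' := by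
        intro x hx
        simp only [Set.mem_insert_iff, Set.mem_singleton_iff] at *
        rcases hx with rfl | rfl <;> simp [hainv] }
  have hmem : ∀ x : Q, x ∈ H ↔ x = 1 ∨ x = a := fun x => Iff.rfl
  haveI : Fintype (Q ⧸ H) := Fintype.ofFinite _
  have hfil : ∀ c : Q ⧸ H,
      Finset.univ.filter (fun q => (QuotientGroup.mk q : Q ⧸ H) = c) = {c.out, c.out * a} := by
    intro c
    ext q
    simp only [Finset.mem_filter, Finset.mem_univ, true_and, Finset.mem_insert,
      Finset.mem_singleton]
    constructor
    · intro h
      have h2 : c.out⁻¹ * q ∈ H :=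
        (QuotientGroup.eq).mp ((QuotientGroup.out_eq' c).trans h.symm)
      rcases (hmem _).mp h2 with h3 | h3
      · exact Or.inl (inv_mul_eq_one.mp h3).symm
      · exact Or.inr (inv_mul_eq_iff_eq_mul.mp h3)
    · rintro (rfl | rfl)
      · exact QuotientGroup.out_eq' c
      · have h' : (c.out * a)⁻¹ * c.out ∈ H := by
          have e : (c.out * a)⁻¹ * c.out = a⁻¹ := by group
          rw [e, hainv]
          exact (hmem a).mpr (Or.inr rfl)
        exact ((QuotientGroup.eq).mpr h').trans (QuotientGroup.out_eq' c)
  have hne : ∀ c : Q ⧸ H, c.out ≠ c.out * a := by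
    intro c h
    exact ha (left_eq_mul.mp h)
  have hcardH : Nat.card H = 2 := by
    have h1 : Nat.card (({1, a} : Set Q)) = 2 := by
      rw [Nat.card_coe_set_eq, Set.ncard_pair (Ne.symm ha)]
    exact h1
  have hquot : Nat.card Q = Nat.card (Q ⧸ H) * 2 := by
    rw [← hcardH]; exact Subgroup.card_eq_card_quotient_mul_card_subgroup H
  have h2Q : 2 ∣ Fintype.card (Q ⧸ H) := by
    rw [← Nat.card_eq_fintype_card]
    omega
  calc ∏ q : Q, φ q
      = ∏ c : Q ⧸ H, ∏ q ∈ Finset.univ.filter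
          (fun q => (QuotientGroup.mk q : Q ⧸ H) = c), φ q :=
        (Finset.prod_fiberwise Finset.univ (fun q => (QuotientGroup.mk q : Q ⧸ H)) φ).symm
    _ = ∏ _c : Q ⧸ H, φ a := by
        refine Finset.prod_congr rfl fun c _ => ?_
        rw [hfil c, Finset.prod_pair (hne c), ← map_mul,
          show c.out * (c.out * a) = a by rw [← mul_assoc, ← pow_two, hsq, one_mul]]
    _ = φ a ^ Fintype.card (Q ⧸ H) := by rw [Finset.prod_const, Finset.card_univ]
    _ = 1 := by
        refine pow_eq_one_of_sq_eq_one' ?_ h2Q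
        rw [← map_pow, hsq, map_one]

/-- Let `A` be a finite `2`-group acting quadratically on an
elementary abelian `2`-group `V` and `A₀ ≤ A` of index at least `4`.  Then the norm
map `N_{A₀}^A` is identically `1` on `C_V(A₀)`. -/
theorem norm_eq_one_of_index_four_quadratic {A V : Type*} [Group A] [Finite A]
    [CommGroup V] [MulDistribMulAction A V]
    (hA : IsPGroup 2 A) (helem : ∀ v : V, v ^ 2 = 1)
    (hquad : actComm A Set.univ (actComm A Set.univ (⊤ : Subgroup V)) = ⊥)
    (A₀ : Subgroup A) (hidx : 4 ≤ A₀.index)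
    (R : Finset A) (hR : IsRelTransversal A₀ ⊤ R)
    (v : V) (hv : ∀ a ∈ A₀, a • v = v) :
    ∏ r ∈ R, r • v = 1 := by

  classical
  obtain ⟨hR1, hR2⟩ := hR
  -- uniqueness of transversal representatives
  have huniq : ∀ r₁ ∈ R, ∀ r₂ ∈ R, r₁⁻¹ * r₂ ∈ A₀ → r₁ = r₂ := by
    intro r₁ h₁ r₂ h₂ h
    obtain ⟨r, -, hu⟩ := hR2 r₂ (Subgroup.mem_top r₂)
    rw [hu r₁ ⟨h₁, h⟩, hu r₂ ⟨h₂, by rw [inv_mul_cancel]; exact A₀.one_mem⟩]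
  -- quadraticity: commutators [v, b] are fixed by A
  have key : ∀ b a : A, a • (v⁻¹ * b • v) = v⁻¹ * b • v := by
    intro b a
    have hgen : v⁻¹ * b • v ∈ actComm A Set.univ (⊤ : Subgroup V) :=
      Subgroup.subset_closure ⟨v, Subgroup.mem_top v, b, Set.mem_univ b, rfl⟩
    have h2 : (v⁻¹ * b • v)⁻¹ * a • (v⁻¹ * b • v) ∈
        actComm A Set.univ (actComm A Set.univ (⊤ : Subgroup V)) :=
      Subgroup.subset_closure ⟨_, hgen, a, Set.mem_univ a, rfl⟩
    rw [hquad, Subgroup.mem_bot] at h2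
    exact (inv_mul_eq_one.mp h2).symm
  have hmul : ∀ a b : A, v⁻¹ * (a * b) • v = (v⁻¹ * a • v) * (v⁻¹ * b • v) := by
    intro a b
    have h1 : (a * b) • v = (a • v) * (v⁻¹ * b • v) := by
      conv_lhs => rw [mul_smul, ← mul_inv_cancel_left v (b • v)]
      rw [smul_mul', key b a]
    rw [h1, ← mul_assoc]
  let f : A →* V := MonoidHom.mk' (fun a => v⁻¹ * a • v) hmul
  have hf : ∀ a : A, f a = v⁻¹ * a • v := fun _ => rfl
  have hsmul : ∀ a : A, a • v = v * f a := by
    intro a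
    rw [hf a, mul_inv_cancel_left]
  have hker₀ : ∀ a ∈ A₀, f a = 1 := by
    intro a ha
    rw [hf a, hv a ha, inv_mul_cancel]
  -- index arithmetic in the 2-group A
  haveI : Fact (Nat.Prime 2) := ⟨Nat.prime_two⟩
  obtain ⟨k, hk⟩ := (IsPGroup.iff_card (p := 2)).mp hA
  have hpow : ∀ d : ℕ, d ∣ Nat.card A → d = 1 ∨ 2 ∣ d := by
    intro d hd
    rw [hk] at hd
    obtain ⟨j, -, rfl⟩ := (Nat.dvd_prime_pow Nat.prime_two).mp hd
    cases j with
    | zero => exact Or.inl rfl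
    | succ n => exact Or.inr ⟨2 ^ n, by rw [pow_succ, mul_comm]⟩
  have hidx4 : 4 ∣ A₀.index := by
    have hd := A₀.index_dvd_card
    rw [hk] at hd
    obtain ⟨j, -, hj⟩ := (Nat.dvd_prime_pow Nat.prime_two).mp hd
    have hj2 : 2 ≤ j := by
      by_contra h
      push_neg at h
      have h1 : (2 : ℕ) ^ j ≤ 2 ^ 1 := Nat.pow_le_pow_right (by norm_num) (by omega)
      rw [hj] at hidx
      omega
    rw [hj, show (4 : ℕ) = 2 ^ 2 by norm_num]
    exact pow_dvd_pow 2 hj2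
  haveI : Fintype (A ⧸ A₀) := Fintype.ofFinite _
  have hcardR : R.card = A₀.index := by
    rw [Subgroup.index, Nat.card_eq_fintype_card, ← Finset.card_univ]
    refine Finset.card_bij (fun r _ => (QuotientGroup.mk r : A ⧸ A₀))
      (fun _ _ => Finset.mem_univ _) ?_ ?_
    · intro r₁ h₁ r₂ h₂ h
      exact huniq r₁ h₁ r₂ h₂ ((QuotientGroup.eq).mp h)
    · intro c _
      obtain ⟨g, rfl⟩ := QuotientGroup.mk_surjective c
      obtain ⟨r, ⟨hrR, hrA⟩, -⟩ := hR2 g (Subgroup.mem_top g)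
      exact ⟨r, hrR, (QuotientGroup.eq).mpr hrA⟩
  have h2R : 2 ∣ R.card := by
    rw [hcardR]
    exact dvd_trans (by norm_num) hidx4
  have hprod : ∏ r ∈ R, r • v = v ^ R.card * ∏ r ∈ R, f r := by
    rw [← Finset.prod_const, ← Finset.prod_mul_distrib]
    exact Finset.prod_congr rfl fun r _ => hsmul r
  -- the main claim: the product of f over the transversal is 1
  have hPf : ∏ r ∈ R, f r = 1 := by
    set K := f.ker with hKdef
    haveI : Fintype (A ⧸ K) := Fintype.ofFinite _
    haveI : Fintype (↥K ⧸ A₀.subgroupOf K) := Fintype.ofFinite _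
    have hA₀K : A₀ ≤ K := fun a ha => MonoidHom.mem_ker.mpr (hker₀ a ha)
    set m := Nat.card (↥K ⧸ A₀.subgroupOf K) with hm
    -- all fibers of R over A ⧸ K have the same size m
    have hfib : ∀ c : A ⧸ K,
        (R.filter fun r => (QuotientGroup.mk r : A ⧸ K) = c).card = m := by
      intro c
      rw [hm, Nat.card_eq_fintype_card, ← Finset.card_univ]
      refine Finset.card_bij (fun r hr => (QuotientGroup.mk (⟨c.out⁻¹ * r,
        (QuotientGroup.eq).mp ((QuotientGroup.out_eq' c).trans
          ((Finset.mem_filter.mp hr).2).symm)⟩ : K) : ↥K ⧸ A₀.subgroupOf K))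
        (fun _ _ => Finset.mem_univ _) ?_ ?_
      · intro r₁ h₁ r₂ h₂ h
        have h' : (c.out⁻¹ * r₁)⁻¹ * (c.out⁻¹ * r₂) ∈ A₀ :=
          Subgroup.mem_subgroupOf.mp ((QuotientGroup.eq).mp h)
        have e : (c.out⁻¹ * r₁)⁻¹ * (c.out⁻¹ * r₂) = r₁⁻¹ * r₂ := by group
        rw [e] at h'
        exact huniq r₁ (Finset.mem_filter.mp h₁).1 r₂ (Finset.mem_filter.mp h₂).1 h'
      · intro b _
        obtain ⟨r, ⟨hrR, hrA⟩, -⟩ := hR2 (c.out * (b.out : A)) (Subgroup.mem_top _)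
        have hrmem : r ∈ R.filter fun r => (QuotientGroup.mk r : A ⧸ K) = c := by
          refine Finset.mem_filter.mpr ⟨hrR, ?_⟩
          have h1 : (QuotientGroup.mk r : A ⧸ K) = QuotientGroup.mk (c.out * (b.out : A)) :=
            (QuotientGroup.eq).mpr (hA₀K hrA)
          have e : (c.out * (b.out : A))⁻¹ * c.out = ((b.out : A))⁻¹ := by group
          have h2 : (QuotientGroup.mk (c.out * (b.out : A)) : A ⧸ K) =
              QuotientGroup.mk c.out :=
            (QuotientGroup.eq).mpr (by rw [e]; exact K.inv_mem b.out.2)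
          exact (h1.trans h2).trans (QuotientGroup.out_eq' c)
        refine ⟨r, hrmem, ?_⟩
        rw [show b = QuotientGroup.mk b.out from (QuotientGroup.out_eq' b).symm]
        refine (QuotientGroup.eq).mpr (Subgroup.mem_subgroupOf.mpr ?_)
        show (c.out⁻¹ * r)⁻¹ * (b.out : A) ∈ A₀
        have e : (c.out⁻¹ * r)⁻¹ * (b.out : A) = r⁻¹ * (c.out * (b.out : A)) := by group
        rw [e]
        exact hrA
    have hPim : ∏ r ∈ R, f r = (∏ c : A ⧸ K, QuotientGroup.kerLift f c) ^ m := by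
      rw [← Finset.prod_fiberwise R (fun r => (QuotientGroup.mk r : A ⧸ K)) (fun r => f r),
        ← Finset.prod_pow]
      refine Finset.prod_congr rfl fun c _ => ?_
      rw [← hfib c, ← Finset.prod_const]
      refine Finset.prod_congr rfl fun r hr => ?_
      rw [← QuotientGroup.kerLift_mk f r, (Finset.mem_filter.mp hr).2]
    have hmdvd : m ∣ Nat.card A := by
      have h1 : m ∣ Nat.card ↥K := (A₀.subgroupOf K).index_dvd_card
      exact h1.trans K.card_subgroup_dvd_card
    rw [hPim]
    rcases hpow m hmdvd with h1 | h2
    · -- m = 1 : A ⧸ K is elementary abelian of order A₀.index ≥ 4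
      rw [h1, pow_one]
      have hsq : ∀ q : A ⧸ K, q ^ 2 = 1 := by
        intro q
        obtain ⟨g, rfl⟩ := QuotientGroup.mk_surjective q
        rw [pow_two, ← QuotientGroup.mk_mul]
        refine (QuotientGroup.eq_one_iff _).mpr (MonoidHom.mem_ker.mpr ?_)
        rw [map_mul, ← pow_two, helem]
      have h4 : 4 ∣ Nat.card (A ⧸ K) := by
        have hKidx : K.index = A₀.index := by
          have h := Subgroup.relIndex_mul_index hA₀K
          rwa [show A₀.relIndex K = m from rfl, h1, one_mul] at h
        rw [show Nat.card (A ⧸ K) = K.index from rfl, hKidx]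
        exact hidx4
      exact prod_hom_eq_one_of_sq (QuotientGroup.kerLift f) hsq h4
    · exact pow_eq_one_of_sq_eq_one' (helem _) h2
  rw [hprod, hPf, mul_one]
  exact pow_eq_one_of_sq_eq_one' (helem v) h2R
end

section
/- Let G be a finite group acting faithfully on an abelian discrete p-toral group D. Every nontrivial offender A of G on D contains a nontrivial best offender: namely, any nontrivial subgroup B ≤ A maximizing |B| · |C_D(B)/D₀| is a best offender on D. -/
open scoped Pointwise

/-- Every nontrivial offender contains a nontrivial best offender:
any nontrivial subgroup `B ≤ A` maximizing `|B| · |C_D(B)/D₀|` among nontrivial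
subgroups of the nontrivial offender `A` is a best offender on `D`. -/
theorem offender_contains_best_offender (p : ℕ) (hp : p.Prime) {G D : Type*} [Group G]
    [Finite G] [CommGroup D] [MulDistribMulAction G D] [FaithfulSMul G D]
    (hD : IsDiscretePToral p D) (D₀ : Subgroup D) (hD₀ : IsMaxDivisible D₀)
    (A : Subgroup G) (hA : IsOffender p D₀ A) (hAnt : A ≠ ⊥)
    (B : Subgroup G) (hBA : B ≤ A) (hBnt : B ≠ ⊥)
    (hmax : ∀ B' : Subgroup G, B' ≤ A → B' ≠ ⊥ →
      Nat.card B' * D₀.relIndex (fixedSub G D (B' : Set G)) ≤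
        Nat.card B * D₀.relIndex (fixedSub G D (B : Set G))) :
    IsBestOffender p D₀ B := by
  obtain ⟨hpA, hcomm, hfix, hidx, hle⟩ := hA
  have hmono : fixedSub G D (A : Set G) ≤ fixedSub G D (B : Set G) :=
    fun x hx a ha => hx a (hBA ha)
  refine ⟨hpA.to_le hBA, fun x hx y hy => hcomm x (hBA hx) y (hBA hy),
    hfix.trans hmono, ?_⟩
  intro B' hB'
  by_cases h : B' = ⊥
  · subst h
    have hbot : fixedSub G D ((⊥ : Subgroup G) : Set G) = ⊤ := by
      ext x
      constructor
      · intro _; trivial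
      · intro _ a ha
        rw [SetLike.mem_coe, Subgroup.mem_bot] at ha
        subst ha; exact one_smul G x
    have hcard : Nat.card (⊥ : Subgroup G) = 1 := Subgroup.card_bot
    rw [hbot, Subgroup.relIndex_top_right, hcard, one_mul]
    have key := hmax A le_rfl hAnt
    have h1 : D₀.relIndex (fixedSub G D (A : Set G)) * (fixedSub G D (A : Set G)).index
        = D₀.index := Subgroup.relIndex_mul_index hfix
    calc D₀.index
        = D₀.relIndex (fixedSub G D (A : Set G)) * (fixedSub G D (A : Set G)).index := h1.symm
      _ ≤ D₀.relIndex (fixedSub G D (A : Set G)) * Nat.card A := Nat.mul_le_mul_left _ hle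
      _ = Nat.card A * D₀.relIndex (fixedSub G D (A : Set G)) := mul_comm _ _
      _ ≤ _ := key
  · exact hmax B' (hB'.trans hBA) h
end

section
/- Let G be a finite group acting faithfully on an abelian discrete 2-toral group D, and suppose G has no over-offenders on D. If A and B are two distinct commuting best offenders of order 2 on D, then C_D(A) ≠ C_D(B), and the group AB acts quadratically on D (i.e., [D, AB, AB] = 1). -/
open scoped Pointwise

section AuxLemmas

/-! ### Divisibility of the Prüfer 2-group -/

lemma prufer_two_div {x : AddCircle (1 : ℚ)} (hx : x ∈ Prufer 2) {n : ℕ} (hn : n ≠ 0) :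
    ∃ y ∈ Prufer 2, n • y = x := by
  obtain ⟨m, hm⟩ := hx
  obtain ⟨q, rfl⟩ := QuotientAddGroup.mk_surjective x
  rw [show ((2:ℕ) ^ m) • (q : AddCircle (1:ℚ)) = ((((2:ℕ) ^ m) • q : ℚ) : AddCircle (1:ℚ)) from
    (AddCircle.coe_nsmul _).symm, AddCircle.coe_eq_zero_iff] at hm
  obtain ⟨K, hK⟩ := hm
  rw [zsmul_eq_mul, mul_one, nsmul_eq_mul] at hK
  push_cast at hK
  set s := n.factorization 2 with hs
  have hst : 2 ^ s * (n / 2 ^ s) = n := Nat.ordProj_mul_ordCompl_eq_self n 2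
  set t := n / 2 ^ s with ht
  have htodd : ¬ (2 ∣ t) := Nat.not_dvd_ordCompl Nat.prime_two hn
  have hcop : IsCoprime (t : ℤ) ((2 : ℤ) ^ (m + s)) := by
    rw [Int.isCoprime_iff_gcd_eq_one]
    have h1 : Nat.Coprime t (2 ^ (m + s)) :=
      ((Nat.Prime.coprime_iff_not_dvd Nat.prime_two).mpr htodd).symm.pow_right _
    have : Int.gcd (t : ℤ) ((2:ℤ) ^ (m + s)) = Nat.gcd t (2 ^ (m + s)) := by
      rw [show ((2:ℤ) ^ (m+s)) = ((2 ^ (m+s) : ℕ) : ℤ) by push_cast; ring]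
      exact Int.gcd_natCast_natCast t _
    rw [this]
    exact h1
  obtain ⟨u, v, huv⟩ := hcop
  have h2s : (2:ℚ) ^ s ≠ 0 := by positivity
  have hn' : (n : ℚ) = 2 ^ s * t := by exact_mod_cast (congrArg (fun z : ℕ => (z : ℚ)) hst).symm
  have huv' : (u : ℚ) * t + v * 2 ^ (m + s) = 1 := by exact_mod_cast congrArg (fun z : ℤ => (z : ℚ)) huv
  refine ⟨((u * q / 2 ^ s : ℚ) : AddCircle (1:ℚ)), ⟨m + s, ?_⟩, ?_⟩
  · rw [show ((2:ℕ) ^ (m+s)) • ((u * q / 2 ^ s : ℚ) : AddCircle (1:ℚ))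
        = ((((2:ℕ) ^ (m+s)) • (u * q / 2 ^ s) : ℚ) : AddCircle (1:ℚ)) from
      (AddCircle.coe_nsmul _).symm, AddCircle.coe_eq_zero_iff]
    refine ⟨u * K, ?_⟩
    rw [zsmul_eq_mul, mul_one, nsmul_eq_mul]
    push_cast
    rw [pow_add]
    set X := (2:ℚ) ^ s with hX
    have hX0 : X ≠ 0 := h2s
    field_simp
    linear_combination (u:ℚ) * hK
  · rw [show (n • ((u * q / 2 ^ s : ℚ) : AddCircle (1:ℚ)))
        = ((n • (u * q / 2 ^ s) : ℚ) : AddCircle (1:ℚ)) from (AddCircle.coe_nsmul _).symm]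
    rw [show ((q : ℚ) : AddCircle (1:ℚ)) = (((n • (u * q / 2 ^ s) : ℚ) - ((n • (u * q / 2 ^ s) : ℚ) - q) : ℚ) : AddCircle (1:ℚ)) by ring_nf]
    rw [AddCircle.coe_sub]
    have : (((n • (u * q / 2 ^ s) : ℚ) - q : ℚ) : AddCircle (1:ℚ)) = 0 := by
      rw [AddCircle.coe_eq_zero_iff]
      refine ⟨-(v * 2 ^ s * K), ?_⟩
      rw [zsmul_eq_mul, mul_one, nsmul_eq_mul]
      push_cast
      rw [hn', pow_add] at *
      set X := (2:ℚ) ^ s with hX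
      have hX0 : X ≠ 0 := h2s
      field_simp
      linear_combination (-(v:ℚ) * 2 ^ s) * hK + (-q) * huv'
    rw [this, sub_zero]

lemma torus_divisible {D : Type*} [CommGroup D] (T : Subgroup D) (h : IsPTorus 2 ↥T) :
    ∀ x ∈ T, ∀ n : ℕ, n ≠ 0 → ∃ y ∈ T, y ^ n = x := by
  obtain ⟨r, ⟨e⟩⟩ := h
  intro x hx n hn
  set z := e ⟨x, hx⟩ with hz
  have hdiv : ∀ i : Fin r, ∃ y ∈ Prufer 2, n • y = ((Multiplicative.toAdd z i : ↥(Prufer 2)) : AddCircle (1:ℚ)) :=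
    fun i => prufer_two_div (Multiplicative.toAdd z i).2 hn
  choose w hw hnw using hdiv
  set W : Fin r → ↥(Prufer 2) := fun i => ⟨w i, hw i⟩ with hW
  have hpow : (Multiplicative.ofAdd W) ^ n = z := by
    apply Multiplicative.toAdd.injective
    rw [toAdd_pow, toAdd_ofAdd]
    funext i
    ext
    show ((n • W i : ↥(Prufer 2)) : AddCircle (1:ℚ)) = _
    push_cast
    exact hnw i
  refine ⟨((e.symm (Multiplicative.ofAdd W) : ↥T) : D), (e.symm (Multiplicative.ofAdd W)).2, ?_⟩
  have : (e.symm (Multiplicative.ofAdd W)) ^ n = ⟨x, hx⟩ := by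
    rw [← map_pow, hpow, hz, MulEquiv.symm_apply_apply]
  calc ((e.symm (Multiplicative.ofAdd W) : ↥T) : D) ^ n
      = (((e.symm (Multiplicative.ofAdd W)) ^ n : ↥T) : D) := by push_cast; ring
    _ = x := by rw [this]

/-! ### Generalities about `fixedSub` and small subgroups -/

section FixedSub

variable {G D : Type*} [Group G] [CommGroup D] [MulDistribMulAction G D]

lemma fixedSub_anti {S T : Set G} (h : S ⊆ T) : fixedSub G D T ≤ fixedSub G D S :=
  fun _ hx a ha => hx a (h ha)

lemma fixedSub_bot : fixedSub G D ((⊥ : Subgroup G) : Set G) = ⊤ := by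
  ext x
  simp only [Subgroup.mem_top, iff_true]
  intro a ha
  have ha' : a = 1 := by simpa using ha
  rw [ha', one_smul]

lemma fixedSub_sup (A B : Subgroup G) :
    fixedSub G D ((A ⊔ B : Subgroup G) : Set G) =
      fixedSub G D (A : Set G) ⊓ fixedSub G D (B : Set G) := by
  apply le_antisymm
  · exact le_inf (fixedSub_anti (SetLike.coe_subset_coe.2 le_sup_left))
      (fixedSub_anti (SetLike.coe_subset_coe.2 le_sup_right))
  · intro x hx g hg
    have hsub : A ⊔ B ≤ MulAction.stabilizer G x :=
      sup_le (fun a ha => MulAction.mem_stabilizer_iff.mpr (hx.1 a ha))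
        (fun b hb => MulAction.mem_stabilizer_iff.mpr (hx.2 b hb))
    exact hsub hg

end FixedSub

lemma card_two_cases {H : Type*} [Group H] {K : Subgroup H} (hK : Nat.card K = 2)
    {z : H} (hz : z ∈ K) (hz1 : z ≠ 1) : ∀ w ∈ K, w = 1 ∨ w = z := by
  obtain ⟨y, -, hy⟩ := (Nat.card_eq_two_iff' (1 : K)).mp hK
  intro w hw
  by_cases h1 : w = 1
  · exact Or.inl h1
  · right
    have e1 : (⟨w, hw⟩ : K) = y := hy _ (by simp [Subtype.ext_iff, h1])
    have e2 : (⟨z, hz⟩ : K) = y := hy _ (by simp [Subtype.ext_iff, hz1])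
    have := e1.trans e2.symm
    simpa [Subtype.ext_iff] using this

lemma card_two_exists {H : Type*} [Group H] {K : Subgroup H} (hK : Nat.card K = 2) :
    ∃ z ∈ K, z ≠ 1 := by
  have hfin : Finite K := Nat.finite_of_card_ne_zero (by omega)
  have : Nontrivial K := Finite.one_lt_card_iff_nontrivial.mp (by omega)
  obtain ⟨z, hz⟩ := exists_ne (1 : K)
  refine ⟨(z : H), z.2, fun h => hz (Subtype.ext (by simpa using h))⟩

lemma sq_eq_one_of_card_two {H : Type*} [Group H] {K : Subgroup H} (hK : Nat.card K = 2) :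
    ∀ z ∈ K, z * z = 1 := by
  intro z hz
  by_cases h1 : z = 1
  · simp [h1]
  · rcases card_two_cases hK hz h1 (z * z) (mul_mem hz hz) with h | h
    · exact h
    · exact absurd (mul_eq_left.mp h) h1

/-! ### The commutator homomorphism -/

/-- `d ↦ d⁻¹ * a • d` as a homomorphism. -/
def cmap (G : Type*) [Group G] {D : Type*} [CommGroup D] [MulDistribMulAction G D]
    (a : G) : D →* D where
  toFun d := d⁻¹ * a • d
  map_one' := by simp
  map_mul' x y := by
    simp only [mul_inv, smul_mul']
    exact mul_mul_mul_comm x⁻¹ y⁻¹ (a • x) (a • y)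

section Cmap

variable {G D : Type*} [Group G] [CommGroup D] [MulDistribMulAction G D]

lemma cmap_apply (a : G) (d : D) : cmap G a d = d⁻¹ * a • d := rfl

lemma cmap_one_apply (d : D) : cmap G (1 : G) d = 1 := by
  rw [cmap_apply, one_smul, inv_mul_cancel]

/-- If the range of `cmap a` has exactly two elements, and `b` commutes with `a`, then
both `a` and `b` fix the range of `cmap a` pointwise. -/
lemma cmap_fixed {a b : G} (haa : a * a = 1) (hab : a * b = b * a)
    (hcard : Nat.card (cmap G (D := D) a).range = 2) :
    ∀ z ∈ (cmap G (D := D) a).range, a • z = z ∧ b • z = z := by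
  have hsq : ∀ z ∈ (cmap G (D := D) a).range, z * z = 1 := sq_eq_one_of_card_two hcard
  have hainv : ∀ d : D, a • (cmap G a d) = (cmap G a d)⁻¹ := by
    intro d
    rw [cmap_apply, smul_mul', smul_inv', ← mul_smul, haa, one_smul, mul_inv, inv_inv, mul_comm]
  have hbmap : ∀ d : D, b • (cmap G a d) = cmap G a (b • d) := by
    intro d
    rw [cmap_apply, cmap_apply, smul_mul', smul_inv', ← mul_smul, ← hab, mul_smul]
  intro z hz
  constructor
  · obtain ⟨d, rfl⟩ := hz
    rw [hainv d]
    exact inv_eq_of_mul_eq_one_left (hsq _ ⟨d, rfl⟩)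
  · by_cases h1 : z = 1
    · rw [h1, smul_one]
    · have hbz : b • z ∈ (cmap G (D := D) a).range := by
        obtain ⟨d, rfl⟩ := hz
        rw [hbmap d]
        exact ⟨b • d, rfl⟩
      rcases card_two_cases hcard hz h1 _ hbz with h | h
      · exfalso
        apply h1
        have : b • z = b • (1 : D) := by rw [h, smul_one]
        exact MulAction.injective b this
      · exact h

end Cmap

/-! ### Decomposition in a sup of commuting subgroups -/

lemma mem_sup_decomp {G : Type*} [Group G] {A B : Subgroup G}
    (hc : ∀ a ∈ A, ∀ b ∈ B, a * b = b * a) :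
    ∀ g ∈ A ⊔ B, ∃ x ∈ A, ∃ y ∈ B, g = x * y := by
  intro g hg
  rw [Subgroup.sup_eq_closure] at hg
  induction hg using Subgroup.closure_induction with
  | mem g hg =>
    rcases hg with h | h
    · exact ⟨g, h, 1, one_mem _, (mul_one g).symm⟩
    · exact ⟨1, one_mem _, g, h, (one_mul g).symm⟩
  | one => exact ⟨1, one_mem _, 1, one_mem _, (one_mul 1).symm⟩
  | mul g h _ _ ihg ihh =>
    obtain ⟨x1, hx1, y1, hy1, rfl⟩ := ihg
    obtain ⟨x2, hx2, y2, hy2, rfl⟩ := ihh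
    refine ⟨x1 * x2, mul_mem hx1 hx2, y1 * y2, mul_mem hy1 hy2, ?_⟩
    have hsw : y1 * x2 = x2 * y1 := (hc x2 hx2 y1 hy1).symm
    calc x1 * y1 * (x2 * y2) = x1 * (y1 * x2) * y2 := by group
      _ = x1 * (x2 * y1) * y2 := by rw [hsw]
      _ = x1 * x2 * (y1 * y2) := by group
  | inv g _ ih =>
    obtain ⟨x, hx, y, hy, rfl⟩ := ih
    refine ⟨x⁻¹, inv_mem hx, y⁻¹, inv_mem hy, ?_⟩
    rw [mul_inv_rev, hc x⁻¹ (inv_mem hx) y⁻¹ (inv_mem hy)]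

lemma sup_comm_elts {G : Type*} [Group G] {A B : Subgroup G}
    (hA : ∀ x ∈ A, ∀ y ∈ A, x * y = y * x) (hB : ∀ x ∈ B, ∀ y ∈ B, x * y = y * x)
    (hc : ∀ a ∈ A, ∀ b ∈ B, a * b = b * a) :
    ∀ g ∈ A ⊔ B, ∀ h ∈ A ⊔ B, g * h = h * g := by
  intro g hg h hh
  obtain ⟨x1, hx1, y1, hy1, rfl⟩ := mem_sup_decomp hc g hg
  obtain ⟨x2, hx2, y2, hy2, rfl⟩ := mem_sup_decomp hc h hh
  have c1 : Commute x1 x2 := hA x1 hx1 x2 hx2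
  have c2 : Commute x1 y2 := hc x1 hx1 y2 hy2
  have c3 : Commute y1 x2 := (hc x2 hx2 y1 hy1).symm
  have c4 : Commute y1 y2 := hB y1 hy1 y2 hy2
  exact ((c1.mul_right c2).mul_left (c3.mul_right c4))

end AuxLemmas

/-- Suppose the finite group `G` acts faithfully on the abelian
discrete `2`-toral group `D` with no over-offenders.  If `A ≠ B` are commuting best
offenders of order `2` on `D`, then `C_D(A) ≠ C_D(B)` and `A·B` acts quadratically
on `D`. -/
theorem commuting_best_offenders_quadratic {G D : Type*} [Group G] [Finite G]
    [CommGroup D] [MulDistribMulAction G D] [FaithfulSMul G D]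
    (hD : IsDiscretePToral 2 D) (D₀ : Subgroup D) (hD₀ : IsMaxDivisible D₀)
    (hno : ∀ A' : Subgroup G, ¬ IsOverOffender 2 D₀ A')
    (A B : Subgroup G) (hA : IsBestOffender 2 D₀ A) (hB : IsBestOffender 2 D₀ B)
    (hcA : Nat.card A = 2) (hcB : Nat.card B = 2)
    (hcomm : ∀ a ∈ A, ∀ b ∈ B, a * b = b * a) (hne : A ≠ B) :
    fixedSub G D (A : Set G) ≠ fixedSub G D (B : Set G) ∧
      actComm G ((A ⊔ B : Subgroup G) : Set G)
        (actComm G ((A ⊔ B : Subgroup G) : Set G) (⊤ : Subgroup D)) = ⊥ := by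
  classical
  -- `D₀` has finite index
  obtain ⟨T, -, hT, k, hk⟩ := hD
  have hTle : T ≤ D₀ := hD₀.2 T (torus_divisible T hT)
  have hTindex : T.index = 2 ^ k := hk
  have hD0index : D₀.index ≠ 0 := by
    intro h0
    have hdvd := Subgroup.index_dvd_of_le hTle
    rw [hTindex, h0] at hdvd
    have : (2:ℕ) ^ k = 0 := Nat.eq_zero_of_zero_dvd hdvd
    exact absurd this (by positivity)
  set CA := fixedSub G D (A : Set G) with hCAdef
  set CB := fixedSub G D (B : Set G) with hCBdef
  set rA := D₀.relIndex CA with hrAdef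
  set rB := D₀.relIndex CB with hrBdef
  -- the index equality `D₀.index = 2 * rA`
  have keyind : ∀ (X : Subgroup G), IsBestOffender 2 D₀ X → Nat.card X = 2 →
      D₀.index = 2 * D₀.relIndex (fixedSub G D (X : Set G)) := by
    intro X hX hcX
    have hbot := hX.2.2.2 ⊥ bot_le
    rw [Subgroup.card_bot, one_mul, fixedSub_bot, Subgroup.relIndex_top_right, hcX] at hbot
    have hnoX : ¬ (D₀.index < Nat.card X * D₀.relIndex (fixedSub G D (X : Set G))) :=
      fun h => hno X ⟨hX, h⟩
    rw [hcX] at hnoX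
    omega
  have eqA : D₀.index = 2 * rA := keyind A hA hcA
  have eqB : D₀.index = 2 * rB := keyind B hB hcB
  have hrA0 : rA ≠ 0 := by intro h; rw [h] at eqA; omega
  have hrB0 : rB ≠ 0 := by intro h; rw [h] at eqB; omega
  have hD0CA : D₀ ≤ CA := hA.2.2.1
  have hD0CB : D₀ ≤ CB := hB.2.2.1
  have hCAind : CA.index = 2 := by
    have h := Subgroup.relIndex_mul_index hD0CA
    rw [← hrAdef, eqA] at h
    exact Nat.eq_of_mul_eq_mul_left (Nat.pos_of_ne_zero hrA0) (h.trans (mul_comm 2 rA))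
  have hCBind : CB.index = 2 := by
    have h := Subgroup.relIndex_mul_index hD0CB
    rw [← hrBdef, eqB] at h
    exact Nat.eq_of_mul_eq_mul_left (Nat.pos_of_ne_zero hrB0) (h.trans (mul_comm 2 rB))
  -- generators of `A` and `B`
  obtain ⟨a, haA, ha1⟩ := card_two_exists hcA
  obtain ⟨b, hbB, hb1⟩ := card_two_exists hcB
  have hAcases : ∀ w ∈ A, w = 1 ∨ w = a := card_two_cases hcA haA ha1
  have hBcases : ∀ w ∈ B, w = 1 ∨ w = b := card_two_cases hcB hbB hb1
  have haa : a * a = 1 := sq_eq_one_of_card_two hcA a haA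
  have hbb : b * b = 1 := sq_eq_one_of_card_two hcB b hbB
  have hab : a * b = b * a := hcomm a haA b hbB
  -- kernels of the commutator maps
  have hkerA : (cmap G (D := D) a).ker = CA := by
    ext d
    rw [MonoidHom.mem_ker, cmap_apply, inv_mul_eq_one]
    constructor
    · intro h g hg
      rcases hAcases g hg with rfl | rfl
      · exact one_smul _ _
      · exact h.symm
    · intro h
      exact (h a haA).symm
  have hkerB : (cmap G (D := D) b).ker = CB := by
    ext d
    rw [MonoidHom.mem_ker, cmap_apply, inv_mul_eq_one]
    constructor
    · intro h g hg
      rcases hBcases g hg with rfl | rfl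
      · exact one_smul _ _
      · exact h.symm
    · intro h
      exact (h b hbB).symm
  have hRA : Nat.card (cmap G (D := D) a).range = 2 := by
    rw [← Subgroup.index_ker, hkerA, hCAind]
  have hRB : Nat.card (cmap G (D := D) b).range = 2 := by
    rw [← Subgroup.index_ker, hkerB, hCBind]
  have hfixA := cmap_fixed haa hab hRA
  have hfixB := cmap_fixed hbb hab.symm hRB
  -- the fixed subgroup of `A ⊔ B`
  set FS := fixedSub G D ((A ⊔ B : Subgroup G) : Set G) with hFSdef
  have hFS : FS = CA ⊓ CB := fixedSub_sup A B
  have hfix_of_ab : ∀ z : D, a • z = z → b • z = z → z ∈ FS := by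
    intro z hza hzb g hg
    have hsub : A ⊔ B ≤ MulAction.stabilizer G z := by
      refine sup_le (fun x hx => ?_) (fun x hx => ?_)
      · rcases hAcases x hx with rfl | rfl
        · exact MulAction.mem_stabilizer_iff.mpr (one_smul _ _)
        · exact MulAction.mem_stabilizer_iff.mpr hza
      · rcases hBcases x hx with rfl | rfl
        · exact MulAction.mem_stabilizer_iff.mpr (one_smul _ _)
        · exact MulAction.mem_stabilizer_iff.mpr hzb
    exact hsub hg
  have hRAFS : ∀ z ∈ (cmap G (D := D) a).range, z ∈ FS := fun z hz =>
    hfix_of_ab z (hfixA z hz).1 (hfixA z hz).2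
  have hRBFS : ∀ z ∈ (cmap G (D := D) b).range, z ∈ FS := fun z hz =>
    hfix_of_ab z (hfixB z hz).2 (hfixB z hz).1
  constructor
  · -- `C_D(A) ≠ C_D(B)`
    intro hEq
    -- there is a maximal-valued subgroup of `A ⊔ B`
    set f : Subgroup G → ℕ := fun X => Nat.card X * D₀.relIndex (fixedSub G D (X : Set G))
      with hfdef
    obtain ⟨B', hB'mem, hB'max⟩ := Set.Finite.exists_maximalFor f
      {X : Subgroup G | X ≤ A ⊔ B} (Set.toFinite _) ⟨⊥, by simp only [Set.mem_setOf_eq]; exact bot_le⟩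
    have hmax : ∀ X : Subgroup G, X ≤ A ⊔ B → f X ≤ f B' := by
      intro X hX
      by_contra h
      push_neg at h
      exact absurd (hB'max hX h.le) (not_le.mpr h)
    -- `B'` is a best offender
    have hB'le : B' ≤ A ⊔ B := hB'mem
    have hsq : ∀ g ∈ A ⊔ B, g * g = 1 := by
      intro g hg
      obtain ⟨x, hx, y, hy, rfl⟩ := mem_sup_decomp hcomm g hg
      have hx2 : x * x = 1 := sq_eq_one_of_card_two hcA x hx
      have hy2 : y * y = 1 := sq_eq_one_of_card_two hcB y hy
      have hsw : y * x = x * y := (hcomm x hx y hy).symm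
      calc x * y * (x * y) = x * (y * x) * y := by group
        _ = x * (x * y) * y := by rw [hsw]
        _ = (x * x) * (y * y) := by group
        _ = 1 := by rw [hx2, hy2, one_mul]
    have hpgroup : IsPGroup 2 ↥B' := by
      intro g
      refine ⟨1, ?_⟩
      have : ((g : G)) * (g : G) = 1 := hsq (g : G) (hB'le g.2)
      ext
      push_cast
      rw [pow_two]
      exact this
    have hD0FS : D₀ ≤ FS := le_of_le_of_eq (le_inf hD0CA hD0CB) hFS.symm
    have hD0B' : D₀ ≤ fixedSub G D (B' : Set G) :=
      le_trans hD0FS (fixedSub_anti (SetLike.coe_subset_coe.2 hB'le))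
    have hbest : IsBestOffender 2 D₀ B' := by
      refine ⟨hpgroup, ?_, hD0B', ?_⟩
      · intro x hx y hy
        exact sup_comm_elts hA.2.1 hB.2.1 hcomm x (hB'le hx) y (hB'le hy)
      · intro X hX
        exact hmax X (hX.trans hB'le)
    -- `A ⊔ B` has at least 3 elements
    obtain ⟨c, hcB', hcA'⟩ : ∃ c ∈ B, c ∉ A := by
      by_contra h
      push_neg at h
      apply hne
      have hBA : B ≤ A := h
      have : (B : Set G) = (A : Set G) := by
        apply Set.eq_of_subset_of_ncard_le hBA
        rw [← Nat.card_coe_set_eq, ← Nat.card_coe_set_eq]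
        simp only [SetLike.coe_sort_coe]
        rw [hcA, hcB]
      exact (SetLike.coe_injective this).symm
    have hcard3 : 3 ≤ Nat.card ↥(A ⊔ B) := by
      by_contra hlt
      push_neg at hlt
      have hAle : (A : Set G) ⊆ ((A ⊔ B : Subgroup G) : Set G) :=
        SetLike.coe_subset_coe.2 le_sup_left
      have hEqset : (A : Set G) = ((A ⊔ B : Subgroup G) : Set G) := by
        refine Set.eq_of_subset_of_ncard_le hAle ?_ (Set.toFinite _)
        rw [← Nat.card_coe_set_eq, ← Nat.card_coe_set_eq]
        simp only [SetLike.coe_sort_coe]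
        rw [hcA]
        omega
      have hAB : A = A ⊔ B := SetLike.coe_injective hEqset
      exact hcA' (hAB ▸ ((le_sup_right : B ≤ A ⊔ B) hcB'))
    -- the contradiction
    have hFSCA : FS = CA := by rw [hFS, ← hEq, inf_idem]
    have hvsup : f (A ⊔ B) = Nat.card ↥(A ⊔ B) * rA := by
      rw [hfdef]
      simp only []
      rw [← hFSdef, hFSCA, hrAdef]
    have hover : D₀.index < f B' := by
      have h1 : f (A ⊔ B) ≤ f B' := hmax (A ⊔ B) le_rfl
      have h2 : 3 * rA ≤ f (A ⊔ B) := by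
        rw [hvsup]
        exact Nat.mul_le_mul_right rA hcard3
      have h3 : D₀.index < 3 * rA := by
        rw [eqA]
        have := Nat.pos_of_ne_zero hrA0
        omega
      omega
    exact hno B' ⟨hbest, hover⟩
  · -- quadratic action
    have hsub : actComm G ((A ⊔ B : Subgroup G) : Set G) (⊤ : Subgroup D) ≤ FS := by
      rw [actComm, Subgroup.closure_le]
      rintro x ⟨w, -, g, hg, rfl⟩
      obtain ⟨u, hu, v, hv, rfl⟩ := mem_sup_decomp hcomm g hg
      have hxeq : w⁻¹ * (u * v) • w = cmap G u w * u • (cmap G v w) := by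
        rw [cmap_apply, cmap_apply, smul_mul', smul_inv', ← mul_smul]
        group
      rw [hxeq]
      have h1 : cmap G u w ∈ FS := by
        rcases hAcases u hu with rfl | rfl
        · rw [cmap_one_apply]; exact one_mem _
        · exact hRAFS _ ⟨w, rfl⟩
      have h2 : u • (cmap G v w) ∈ FS := by
        have hvFS : cmap G v w ∈ FS := by
          rcases hBcases v hv with rfl | rfl
          · rw [cmap_one_apply]; exact one_mem _
          · exact hRBFS _ ⟨w, rfl⟩
        have := hvFS u (le_sup_left (a := A) (b := B) hu)
        rw [this]
        exact hvFS
      exact mul_mem h1 h2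
    rw [eq_bot_iff, actComm, Subgroup.closure_le]
    rintro x ⟨w, hw, g, hg, rfl⟩
    have hwFS : w ∈ FS := hsub hw
    have : g • w = w := hwFS g hg
    simp [this]
end

section
/- Let G be a finite group acting faithfully on an abelian discrete 2-toral group D with no over-offenders, and let A, B be best offenders of order 2 on D with [A,B] ≠ 1. Then L := ⟨A,B⟩ is isomorphic to the symmetric group S₃, the commutator subgroup [D,L] is elementary abelian of order 4, and D = [D,L] × C_D(L). -/
open scoped Pointwise

set_option linter.unusedSectionVars false
set_option linter.unusedVariables false

lemma prufer_divisible (x : AddCircle (1 : ℚ)) (hx : x ∈ Prufer 2) (n : ℕ) (hn : n ≠ 0) :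
    ∃ y ∈ Prufer 2, n • y = x := by
  obtain ⟨e, he⟩ := hx
  obtain ⟨j, m, hm, rfl⟩ := Nat.exists_eq_pow_mul_and_not_dvd hn 2 (by norm_num)
  have hodd : (m : ℤ) * 1 + -((m / 2 : ℕ) : ℤ) * 2 = 1 := by
    omega
  have hcop : IsCoprime (m : ℤ) ((2 : ℤ) ^ e) :=
    IsCoprime.pow_right ⟨1, -((m / 2 : ℕ) : ℤ), by linarith [hodd]⟩
  obtain ⟨u, v, huv⟩ := hcop
  obtain ⟨q, rfl⟩ : ∃ q : ℚ, (q : AddCircle (1 : ℚ)) = x := Quotient.exists_rep x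
  set φ : ℚ →+ AddCircle (1 : ℚ) := QuotientAddGroup.mk' (AddSubgroup.zmultiples (1 : ℚ)) with hφ
  have hφq : ∀ r : ℚ, φ r = (r : AddCircle (1 : ℚ)) := fun _ => rfl
  have keyN : ∀ (k : ℕ) (r : ℚ), k • φ r = φ ((k : ℚ) * r) := by
    intro k r
    rw [← map_nsmul, nsmul_eq_mul]
  have keyZ : ∀ (k : ℤ) (r : ℚ), k • φ r = φ ((k : ℚ) * r) := by
    intro k r
    rw [← map_zsmul, zsmul_eq_mul]
  have he' : φ ((2 : ℚ) ^ e * q) = 0 := by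
    have h := keyN (2 ^ e) q
    rw [hφq, he] at h
    have hc : ((2 ^ e : ℕ) : ℚ) = (2 : ℚ) ^ e := by push_cast; ring
    rw [hc] at h
    exact h.symm
  have hq : (u : ℚ) * (m : ℚ) + (v : ℚ) * (2 : ℚ) ^ e = 1 := by
    exact_mod_cast congrArg (fun z : ℤ => (z : ℚ)) huv
  have h2j : ((2 : ℚ) ^ j) ≠ 0 := by positivity
  refine ⟨φ ((u : ℚ) * q / 2 ^ j), ⟨e + j, ?_⟩, ?_⟩
  · rw [keyN]
    have harg : ((2 ^ (e + j) : ℕ) : ℚ) * ((u : ℚ) * q / 2 ^ j) = (u : ℚ) * ((2 : ℚ) ^ e * q) := by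
      push_cast
      field_simp
      ring
    rw [harg, ← keyZ, he', smul_zero]
  · rw [keyN]
    have harg : ((2 ^ j * m : ℕ) : ℚ) * ((u : ℚ) * q / 2 ^ j) =
        q + (-v : ℚ) * ((2 : ℚ) ^ e * q) := by
      push_cast
      field_simp
      linear_combination q * hq
    rw [harg, map_add, hφq]
    have : φ ((-v : ℚ) * ((2 : ℚ) ^ e * q)) = 0 := by
      rw [show ((-v : ℚ)) = ((-v : ℤ) : ℚ) by push_cast; ring, ← keyZ, he', smul_zero]
    rw [this, add_zero]

lemma divisible_of_isPTorus {H : Type*} [Group H] (h : IsPTorus 2 H) (x : H) (n : ℕ)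
    (hn : n ≠ 0) : ∃ y : H, y ^ n = x := by
  obtain ⟨r, ⟨e⟩⟩ := h
  have h1 : ∀ i, ∃ v : Prufer 2, n • v = Multiplicative.toAdd (e x) i := by
    intro i
    obtain ⟨y, hy, hny⟩ := prufer_divisible _ (Multiplicative.toAdd (e x) i).2 n hn
    exact ⟨⟨y, hy⟩, Subtype.ext hny⟩
  choose v hv using h1
  refine ⟨e.symm (Multiplicative.ofAdd v), ?_⟩
  have : (Multiplicative.ofAdd v) ^ n = e x := by
    rw [← ofAdd_nsmul]
    have : n • v = Multiplicative.toAdd (e x) := funext hv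
    rw [this]
    rfl
  rw [← map_pow, this, MulEquiv.symm_apply_apply]

lemma index_ne_zero_of_toral {D : Type*} [CommGroup D] (hD : IsDiscretePToral 2 D)
    {D₀ : Subgroup D} (hD₀ : IsMaxDivisible D₀) : D₀.index ≠ 0 := by
  obtain ⟨T, -, hT, k, hk⟩ := hD
  have hTle : T ≤ D₀ := by
    refine hD₀.2 T ?_
    intro x hx n hn
    obtain ⟨y, hy⟩ := divisible_of_isPTorus hT ⟨x, hx⟩ n hn
    exact ⟨(y : D), y.2, by rw [← Subgroup.coe_pow, hy]⟩
  have hdvd : D₀.index ∣ T.index := Subgroup.index_dvd_of_le hTle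
  have hTidx : T.index = 2 ^ k := hk
  rw [hTidx] at hdvd
  intro h0
  rw [h0] at hdvd
  exact absurd (Nat.eq_zero_of_zero_dvd hdvd) (by positivity)

section Aux

variable {G D : Type*} [Group G] [CommGroup D] [MulDistribMulAction G D]

lemma eq_of_ne_one_of_card_two {α : Type*} [One α] (h : Nat.card α = 2) {x y : α}
    (hx : x ≠ 1) (hy : y ≠ 1) : x = y := by
  rw [Nat.card_eq_two_iff] at h
  obtain ⟨u, v, huv, huniv⟩ := h
  have hmem : ∀ w : α, w = u ∨ w = v := by
    intro w
    have : w ∈ ({u, v} : Set α) := huniv ▸ Set.mem_univ w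
    simpa using this
  rcases hmem 1 with h1 | h1 <;> rcases hmem x with h2 | h2 <;> rcases hmem y with h3 | h3 <;>
    simp_all

lemma mem_fixedSub_iff {A : Set G} {x : D} : x ∈ fixedSub G D A ↔ ∀ a ∈ A, a • x = x :=
  Iff.rfl

lemma fixedSub_antitone {A B : Set G} (h : A ⊆ B) : fixedSub G D B ≤ fixedSub G D A :=
  fun _ hx a ha => hx a (h ha)

/-- Existence of an over-offender from any "offending" abelian 2-subgroup. -/
lemma exists_overOffender_of_value [Finite G] {D₀ : Subgroup D} (C₀ : Subgroup G)
    (h2 : IsPGroup 2 ↥C₀) (hcomm : ∀ x ∈ C₀, ∀ y ∈ C₀, x * y = y * x)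
    (hfix : D₀ ≤ fixedSub G D (C₀ : Set G))
    (hval : D₀.index < Nat.card C₀ * D₀.relIndex (fixedSub G D (C₀ : Set G))) :
    ∃ A' : Subgroup G, IsOverOffender 2 D₀ A' := by
  classical
  set f : Subgroup G → ℕ :=
    fun B => if B ≤ C₀ then Nat.card B * D₀.relIndex (fixedSub G D (B : Set G)) else 0 with hf
  obtain ⟨B₀, hB₀⟩ := Finite.exists_max f
  have hfC₀ : f C₀ = Nat.card C₀ * D₀.relIndex (fixedSub G D (C₀ : Set G)) := by
    simp [hf]
  have hpos : 0 < f C₀ := by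
    rw [hfC₀]; exact lt_of_le_of_lt (Nat.zero_le _) hval
  have hB₀pos : 0 < f B₀ := lt_of_lt_of_le hpos (hB₀ C₀)
  have hB₀le : B₀ ≤ C₀ := by
    by_contra hcon
    simp [hf, hcon] at hB₀pos
  have hB₀val : f B₀ = Nat.card B₀ * D₀.relIndex (fixedSub G D (B₀ : Set G)) := by
    simp [hf, hB₀le]
  refine ⟨B₀, ⟨⟨IsPGroup.to_le h2 hB₀le,
    fun x hx y hy => hcomm x (hB₀le hx) y (hB₀le hy),
    le_trans hfix (fixedSub_antitone (by exact_mod_cast hB₀le)), ?_⟩, ?_⟩⟩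
  · intro B hB
    have hBle : B ≤ C₀ := le_trans hB hB₀le
    have := hB₀ B
    rw [hB₀val] at this
    simpa [hf, hBle] using this
  · rw [← hB₀val]
    exact lt_of_lt_of_le (by rw [← hfC₀] at hval; exact hval) (hB₀ C₀)

/-- Structure of a best offender of order 2 together with no over-offenders. -/
lemma exists_z (a : G) (haa : a * a = 1)
    (hidx : (fixedSub G D ({a} : Set G)).index = 2) :
    ∃ z : D, z ≠ 1 ∧ z * z = 1 ∧ a • z = z ∧ (∀ d : D, a • d = d ∨ a • d = d * z) ∧
      ∃ d₀ : D, a • d₀ = d₀ * z := by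
  have haa' : ∀ d : D, a • a • d = d := by
    intro d; rw [← mul_smul, haa, one_smul]
  set f : D →* D := MonoidHom.mk' (fun d => d⁻¹ * a • d) (by
    intro x y
    show (x * y)⁻¹ * a • (x * y) = (x⁻¹ * a • x) * (y⁻¹ * a • y)
    rw [smul_mul']
    simp [mul_assoc, mul_comm, mul_left_comm]) with hfdef
  have hfapp : ∀ d : D, f d = d⁻¹ * a • d := fun _ => rfl
  have hker : f.ker = fixedSub G D ({a} : Set G) := by
    ext x
    simp only [MonoidHom.mem_ker, hfapp, inv_mul_eq_one, mem_fixedSub_iff, Set.mem_singleton_iff]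
    constructor
    · rintro h g rfl; exact h.symm
    · intro h; exact (h a rfl).symm
  have hcard : Nat.card f.range = 2 := by
    rw [← Subgroup.index_ker, hker, hidx]
  have hkerne : f.ker ≠ ⊤ := by
    intro h
    rw [← hker, h, Subgroup.index_top] at hidx
    norm_num at hidx
  obtain ⟨d₀, hd₀⟩ : ∃ d₀ : D, d₀ ∉ f.ker := by
    by_contra hcon
    push_neg at hcon
    exact hkerne ((Subgroup.eq_top_iff' _).mpr hcon)
  have hz1 : f d₀ ≠ 1 := fun h => hd₀ h
  set z := f d₀ with hzdef
  have key : ∀ d : D, f d = 1 ∨ f d = z := by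
    intro d
    by_cases h : f d = 1
    · exact Or.inl h
    · refine Or.inr ?_
      have := eq_of_ne_one_of_card_two (α := ↥f.range) hcard
        (x := ⟨f d, ⟨d, rfl⟩⟩) (y := ⟨z, ⟨d₀, rfl⟩⟩)
        (by simpa [Subtype.ext_iff] using h) (by simpa [Subtype.ext_iff] using hz1)
      simpa [Subtype.ext_iff] using this
  have hz2 : z * z = 1 := by
    rcases key (d₀ * d₀) with h | h
    · rwa [map_mul, ← hzdef] at h
    · rw [map_mul, ← hzdef] at h
      have : z = 1 := by
        have := h
        nth_rewrite 3 [show z = z * 1 by rw [mul_one]] at this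
        exact mul_left_cancel this
      exact absurd this hz1
  have hzfix : a • z = z := by
    have h1 : a • z = z⁻¹ := by
      rw [hzdef, hfapp, smul_mul', smul_inv', haa' d₀, mul_inv_rev, inv_inv, mul_comm]
    rw [h1, inv_eq_of_mul_eq_one_right hz2]
  refine ⟨z, hz1, hz2, hzfix, ?_, d₀, ?_⟩
  · intro d
    rcases key d with h | h
    · left
      rw [hfapp, inv_mul_eq_one] at h
      exact h.symm
    · right
      rw [hfapp] at h
      rw [← h]
      simp [mul_assoc]
  · have := hfapp d₀
    rw [← hzdef] at this
    rw [this]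
    simp [mul_assoc]

end Aux

section Main

variable {G D : Type*} [Group G] [Finite G] [CommGroup D] [MulDistribMulAction G D]
  [FaithfulSMul G D]

lemma bestOffender_two_structure {D₀ : Subgroup D} (hD₀idx : D₀.index ≠ 0)
    (hno : ∀ A' : Subgroup G, ¬ IsOverOffender 2 D₀ A')
    {A : Subgroup G} (hA : IsBestOffender 2 D₀ A) (hcA : Nat.card A = 2) :
    ∃ a : G, a ∈ A ∧ a ≠ 1 ∧ a * a = 1 ∧ (A : Set G) = {1, a} ∧
      (fixedSub G D ({a} : Set G)).index = 2 ∧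
      D₀ ≤ fixedSub G D ({a} : Set G) ∧
      D₀.index = 2 * D₀.relIndex (fixedSub G D ({a} : Set G)) := by
  obtain ⟨a, haA, ha1⟩ : ∃ a ∈ A, a ≠ 1 := by
    by_contra hcon
    push_neg at hcon
    have : A = ⊥ := (Subgroup.eq_bot_iff_forall A).mpr hcon
    rw [this, Subgroup.card_bot] at hcA
    norm_num at hcA
  have huniq : ∀ x ∈ A, x = 1 ∨ x = a := by
    intro x hx
    by_cases h : x = 1
    · exact Or.inl h
    · refine Or.inr ?_
      have := eq_of_ne_one_of_card_two (α := ↥A) hcA (x := (⟨x, hx⟩ : ↥A)) (y := (⟨a, haA⟩ : ↥A))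
        (by simpa [Subtype.ext_iff] using h) (by simpa [Subtype.ext_iff] using ha1)
      simpa [Subtype.ext_iff] using this
  have haa : a * a = 1 := by
    rcases huniq (a * a) (mul_mem haA haA) with h | h
    · exact h
    · exact absurd (mul_left_cancel (show a * a = a * 1 by rw [h, mul_one])) ha1
  have hset : (A : Set G) = {1, a} := by
    ext x
    simp only [SetLike.mem_coe, Set.mem_insert_iff, Set.mem_singleton_iff]
    constructor
    · exact huniq x
    · rintro (rfl | rfl)
      · exact one_mem A
      · exact haA
  have hfixeq : fixedSub G D ((A : Subgroup G) : Set G) = fixedSub G D ({a} : Set G) := by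
    ext x
    rw [hset]
    simp only [mem_fixedSub_iff, Set.mem_insert_iff, Set.mem_singleton_iff]
    constructor
    · intro h g hg
      exact h g (Or.inr hg)
    · rintro h g (rfl | rfl)
      · exact one_smul _ _
      · exact h _ rfl
  have hDle : D₀ ≤ fixedSub G D ({a} : Set G) := hfixeq ▸ hA.2.2.1
  -- value equality
  have hbotfix : fixedSub G D ((⊥ : Subgroup G) : Set G) = ⊤ := by
    ext x
    simp only [mem_fixedSub_iff, Subgroup.mem_top, iff_true, SetLike.mem_coe]
    intro g hg
    rw [Subgroup.mem_bot] at hg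
    rw [hg, one_smul]
  have hle : D₀.index ≤ 2 * D₀.relIndex (fixedSub G D ((A : Subgroup G) : Set G)) := by
    have := hA.2.2.2 ⊥ bot_le
    rwa [hbotfix, Subgroup.card_bot, Subgroup.relIndex_top_right, one_mul, hcA] at this
  have hge : 2 * D₀.relIndex (fixedSub G D ((A : Subgroup G) : Set G)) ≤ D₀.index := by
    have := hno A
    rw [IsOverOffender] at this
    push_neg at this
    have h2 := this hA
    rwa [hcA] at h2
  have heq : D₀.index = 2 * D₀.relIndex (fixedSub G D ({a} : Set G)) := by
    rw [← hfixeq]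
    exact le_antisymm hle hge
  have hRne : D₀.relIndex (fixedSub G D ({a} : Set G)) ≠ 0 := by
    intro h
    rw [h, mul_zero] at heq
    exact hD₀idx heq
  have hidx2 : (fixedSub G D ({a} : Set G)).index = 2 := by
    have hrel := Subgroup.relIndex_mul_index hDle
    rw [heq] at hrel
    have := Nat.eq_of_mul_eq_mul_left (Nat.pos_of_ne_zero hRne)
      (show D₀.relIndex (fixedSub G D ({a} : Set G)) * (fixedSub G D ({a} : Set G)).index =
        D₀.relIndex (fixedSub G D ({a} : Set G)) * 2 by rw [hrel]; ring)
    exact this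
  exact ⟨a, haA, ha1, haa, hset, hidx2, hDle, heq⟩

omit [Finite G] in
lemma case00_false (a b : G) {za zb : D}
    (hab : a * b ≠ b * a) (haa : a * a = 1) (hbb : b * b = 1)
    (hza2 : za * za = 1) (hzb2 : zb * zb = 1)
    (ka : ∀ d : D, a • d = d ∨ a • d = d * za)
    (kb : ∀ d : D, b • d = d ∨ b • d = d * zb)
    (haza : a • za = za) (hbzb : b • zb = zb)
    (hr : b • za = za) (hs : a • zb = zb) : False := by
  have hza2' : ∀ x : D, za * (za * x) = x := fun x => by rw [← mul_assoc, hza2, one_mul]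
  have hzb2' : ∀ x : D, zb * (zb * x) = x := fun x => by rw [← mul_assoc, hzb2, one_mul]
  have key : ∀ d : D, ((a * b) * (a * b)) • d = d := by
    intro d
    rcases ka d with h1 | h1 <;> rcases kb d with h2 | h2 <;>
      simp only [mul_smul, smul_mul', h1, h2, hr, hs, haza, hbzb] <;>
      simp [mul_comm, mul_left_comm, mul_assoc, hza2, hzb2, hza2', hzb2']
  have h1 : (a * b) * (a * b) = 1 := by
    apply FaithfulSMul.eq_of_smul_eq_smul (α := D)
    intro d
    rw [key d, one_smul]
  have : a * b = b * a := by
    have h2 : a * b = (a * b)⁻¹ := (mul_eq_one_iff_eq_inv.mp h1)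
    rw [mul_inv_rev, inv_eq_of_mul_eq_one_right haa, inv_eq_of_mul_eq_one_right hbb] at h2
    exact h2
  exact hab this

end Main

section Main2

variable {G D : Type*} [Group G] [Finite G] [CommGroup D] [MulDistribMulAction G D]
  [FaithfulSMul G D]

set_option maxHeartbeats 1000000 in
lemma caseD8_false {D₀ : Subgroup D} (hD₀idx : D₀.index ≠ 0)
    (hno : ∀ A' : Subgroup G, ¬ IsOverOffender 2 D₀ A')
    (a b : G) {za zb : D}
    (hab : a * b ≠ b * a) (haa : a * a = 1) (hbb : b * b = 1)
    (hzb1 : zb ≠ 1)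
    (hza2 : za * za = 1) (hzb2 : zb * zb = 1)
    (ka : ∀ d : D, a • d = d ∨ a • d = d * za)
    (kb : ∀ d : D, b • d = d ∨ b • d = d * zb)
    (haza : a • za = za) (hbzb : b • zb = zb)
    (hr : b • za = za * zb) (hs : a • zb = zb)
    (hwit : ∃ d : D, a • d = d * za)
    (hDa : ∀ x ∈ D₀, a • x = x) (hDb : ∀ x ∈ D₀, b • x = x)
    (hidx2 : D₀.index = 2 * D₀.relIndex (fixedSub G D ({a} : Set G))) : False := by
  have ha1 : a ≠ 1 := by
    rintro rfl; exact hab (by rw [one_mul, mul_one])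
  have hza2' : ∀ x : D, za * (za * x) = x := fun x => by rw [← mul_assoc, hza2, one_mul]
  have hzb2' : ∀ x : D, zb * (zb * x) = x := fun x => by rw [← mul_assoc, hzb2, one_mul]
  obtain ⟨c, hcdef⟩ : ∃ c : G, c = (a * b) * (a * b) := ⟨_, rfl⟩
  have hc1 : ∀ d : D, a • d = d → c • d = d := by
    intro d hd
    rcases kb d with h | h <;>
      simp only [hcdef, mul_smul, smul_mul', hd, h, hr, hs, haza, hbzb] <;>
      simp [mul_comm, mul_left_comm, mul_assoc, hza2, hzb2, hza2', hzb2']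
  have hc2 : ∀ d : D, a • d = d * za → c • d = d * zb := by
    intro d hd
    rcases kb d with h | h <;>
      simp only [hcdef, mul_smul, smul_mul', hd, h, hr, hs, haza, hbzb] <;>
      simp [mul_comm, mul_left_comm, mul_assoc, hza2, hzb2, hza2', hzb2']
  obtain ⟨d₀, hd₀⟩ := hwit
  have hza1 : za ≠ 1 := by
    intro h
    rw [h, mul_one] at hd₀
    have := hc1 d₀ hd₀
    rw [hc2 d₀ (by rw [h, mul_one]; exact hd₀)] at this
    exact hzb1 (mul_left_cancel (show d₀ * zb = d₀ * 1 by rw [mul_one, this]))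
  have hzazb : za ≠ zb := by
    intro h
    rw [h] at hr
    rw [hbzb] at hr
    exact hzb1 (mul_left_cancel (show zb * zb = zb * 1 by rw [mul_one, ← hr]))
  have hcd₀ : c • d₀ = d₀ * zb := hc2 d₀ hd₀
  have hc_ne1 : c ≠ 1 := by
    intro h
    rw [h, one_smul] at hcd₀
    exact hzb1 (mul_left_cancel (show d₀ * zb = d₀ * 1 by rw [mul_one, ← hcd₀]))
  have hcnea : c ≠ a := by
    intro h
    rw [h, hd₀] at hcd₀
    exact hzazb (mul_left_cancel hcd₀)
  -- c is an involution commuting with a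
  have hcc : c * c = 1 := by
    apply FaithfulSMul.eq_of_smul_eq_smul (α := D)
    intro d
    rw [one_smul, mul_smul]
    rcases ka d with h | h
    · rw [hc1 d h, hc1 d h]
    · rw [hc2 d h, smul_mul', hc2 d h, hc1 zb hs, mul_assoc, hzb2, mul_one]
  have hac : a * c = c * a := by
    apply FaithfulSMul.eq_of_smul_eq_smul (α := D)
    intro d
    rw [mul_smul, mul_smul]
    rcases ka d with h | h
    · rw [hc1 d h, h, hc1 d h]
    · rw [hc2 d h, h, smul_mul', h, hs, smul_mul', hc2 d h, hc1 za haza]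
      simp [mul_comm, mul_left_comm, mul_assoc]
  -- ground multiplication facts
  have h3 : a * (a * c) = c := by rw [← mul_assoc, haa, one_mul]
  have h4 : c * (a * c) = a := by rw [hac, ← mul_assoc, hcc, one_mul]
  have h5 : (a * c) * a = c := by rw [mul_assoc, ← hac, ← mul_assoc, haa, one_mul]
  have h6 : (a * c) * c = a := by rw [mul_assoc, hcc, mul_one]
  have h7 : (a * c) * (a * c) = 1 := by rw [mul_assoc, h4, haa]
  have h8 : c * a = a * c := hac.symm
  -- the Klein four subgroup {1, a, c, a*c}
  set K : Subgroup G :=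
    { carrier := {1, a, c, a * c}
      one_mem' := by simp
      mul_mem' := by
        rintro x y hx hy
        simp only [Set.mem_insert_iff, Set.mem_singleton_iff] at hx hy ⊢
        rcases hx with rfl | rfl | rfl | rfl <;> rcases hy with rfl | rfl | rfl | rfl <;>
          simp [haa, hcc, h3, h4, h5, h6, h7, h8, one_mul, mul_one]
      inv_mem' := by
        rintro x hx
        simp only [Set.mem_insert_iff, Set.mem_singleton_iff] at hx ⊢
        rcases hx with rfl | rfl | rfl | rfl <;>
          simp [inv_eq_of_mul_eq_one_right haa, inv_eq_of_mul_eq_one_right hcc,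
            inv_eq_of_mul_eq_one_right h7] } with hKdef
  have hKset : (K : Set G) = {1, a, c, a * c} := rfl
  -- distinctness
  have hane : a ≠ a * c := by
    intro h
    have h1 : (1 : G) = c := mul_left_cancel (show a * 1 = a * c by rw [mul_one]; exact h)
    exact hc_ne1 h1.symm
  have hcne : c ≠ a * c := by
    intro h
    have h1 : (1 : G) = a := mul_right_cancel (show 1 * c = a * c by rw [one_mul]; exact h)
    exact ha1 h1.symm
  have hacne1 : a * c ≠ 1 := by
    intro h
    have h1 : c = a⁻¹ := eq_inv_of_mul_eq_one_right h
    rw [inv_eq_of_mul_eq_one_right haa] at h1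
    exact hcnea h1
  have hcardK : Nat.card ↥K = 4 := by
    have h1n : (1:G) ∉ ({a, c, a*c} : Set G) := by
      simp only [Set.mem_insert_iff, Set.mem_singleton_iff]
      push_neg
      exact ⟨Ne.symm ha1, Ne.symm hc_ne1, Ne.symm hacne1⟩
    have h2n : a ∉ ({c, a*c} : Set G) := by
      simp only [Set.mem_insert_iff, Set.mem_singleton_iff]
      push_neg
      exact ⟨Ne.symm hcnea, hane⟩
    have h3n : c ∉ ({a*c} : Set G) := by simpa using hcne
    have : Nat.card ↥(K : Set G) = 4 := by
      rw [Nat.card_coe_set_eq, hKset, Set.ncard_insert_of_notMem h1n (Set.toFinite _),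
        Set.ncard_insert_of_notMem h2n (Set.toFinite _),
        Set.ncard_insert_of_notMem h3n (Set.toFinite _), Set.ncard_singleton]
    exact this
  have hfixK : fixedSub G D (K : Set G) = fixedSub G D ({a} : Set G) := by
    ext x
    rw [mem_fixedSub_iff, mem_fixedSub_iff]
    constructor
    · intro h g hg
      rw [Set.mem_singleton_iff] at hg
      subst hg
      refine h g ?_
      rw [hKset]
      simp
    · intro h g hg
      have hax : a • x = x := h a rfl
      have hg' : g = 1 ∨ g = a ∨ g = c ∨ g = a*c := by
        rw [hKset] at hg
        exact hg
      rcases hg' with rfl | rfl | rfl | rfl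
      · exact one_smul _ _
      · exact hax
      · exact hc1 x hax
      · rw [mul_smul, hc1 x hax]
        exact hax
  have hDfixK : D₀ ≤ fixedSub G D (K : Set G) := by
    rw [hfixK]
    intro x hx
    rw [mem_fixedSub_iff]
    intro g hg
    rw [Set.mem_singleton_iff] at hg
    subst hg
    exact hDa x hx
  have hKp : IsPGroup 2 ↥K := by
    intro g
    refine ⟨1, ?_⟩
    have hg2 : (g : G) * (g : G) = 1 := by
      have hgm : (g:G) = 1 ∨ (g:G) = a ∨ (g:G) = c ∨ (g:G) = a*c := by
        have := g.2
        rw [← SetLike.mem_coe, hKset] at this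
        exact this
      rcases hgm with h | h | h | h <;> rw [h] <;> simp [haa, hcc, h7]
    have h21 : (2:ℕ)^1 = 2 := rfl
    rw [h21]
    refine Subtype.ext ?_
    push_cast
    rw [pow_two]
    exact hg2
  have hcommK : ∀ x ∈ K, ∀ y ∈ K, x * y = y * x := by
    intro x hx y hy
    have hx' : x = 1 ∨ x = a ∨ x = c ∨ x = a*c := by
      rw [← SetLike.mem_coe, hKset] at hx
      exact hx
    have hy' : y = 1 ∨ y = a ∨ y = c ∨ y = a*c := by
      rw [← SetLike.mem_coe, hKset] at hy
      exact hy
    rcases hx' with rfl|rfl|rfl|rfl <;> rcases hy' with rfl|rfl|rfl|rfl <;>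
      simp [h3, h4, h5, h6, h8, one_mul, mul_one]
  have hRne : D₀.relIndex (fixedSub G D ({a} : Set G)) ≠ 0 := fun h => hD₀idx (by
    rw [hidx2, h, mul_zero])
  have hval : D₀.index < Nat.card ↥K * D₀.relIndex (fixedSub G D (K : Set G)) := by
    rw [hfixK, hcardK, hidx2]
    have : 0 < D₀.relIndex (fixedSub G D ({a} : Set G)) := Nat.pos_of_ne_zero hRne
    omega
  obtain ⟨A', hA'⟩ := exists_overOffender_of_value K hKp hcommK hDfixK hval
  exact hno A' hA'

end Main2

section Main3

variable {G D : Type*} [Group G] [Finite G] [CommGroup D] [MulDistribMulAction G D]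
  [FaithfulSMul G D]

set_option maxHeartbeats 4000000 in
lemma main_case (A B : Subgroup G) (a b : G)
    (haA : a ∈ A) (hbB : b ∈ B)
    (hAset : (A : Set G) = {1, a}) (hBset : (B : Set G) = {1, b})
    {za zb : D} (d₀ e₀ : D)
    (hab : a * b ≠ b * a) (haa : a * a = 1) (hbb : b * b = 1)
    (hza1 : za ≠ 1) (hzb1 : zb ≠ 1) (hza2 : za * za = 1) (hzb2 : zb * zb = 1)
    (ka : ∀ d : D, a • d = d ∨ a • d = d * za)
    (kb : ∀ d : D, b • d = d ∨ b • d = d * zb)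
    (haza : a • za = za) (hbzb : b • zb = zb)
    (hr1 : b • za = za * zb) (hs1 : a • zb = zb * za)
    (hd₀ : a • d₀ = d₀ * za) (he₀ : b • e₀ = e₀ * zb) :
    Nonempty (↥(A ⊔ B : Subgroup G) ≃* Equiv.Perm (Fin 3)) ∧
      (Nat.card ↥(actComm G ((A ⊔ B : Subgroup G) : Set G) (⊤ : Subgroup D)) = 4 ∧
        ∀ x ∈ actComm G ((A ⊔ B : Subgroup G) : Set G) (⊤ : Subgroup D), x ^ 2 = 1) ∧
      (actComm G ((A ⊔ B : Subgroup G) : Set G) (⊤ : Subgroup D) ⊓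
          fixedSub G D (((A ⊔ B : Subgroup G)) : Set G) = ⊥ ∧
        actComm G ((A ⊔ B : Subgroup G) : Set G) (⊤ : Subgroup D) ⊔
          fixedSub G D (((A ⊔ B : Subgroup G)) : Set G) = ⊤) := by
  classical
  have ha1 : a ≠ 1 := by rintro rfl; exact hab (by rw [one_mul, mul_one])
  have hb1 : b ≠ 1 := by rintro rfl; exact hab (by rw [one_mul, mul_one])
  have hinva : a⁻¹ = a := inv_eq_of_mul_eq_one_right haa
  have hinvb : b⁻¹ = b := inv_eq_of_mul_eq_one_right hbb
  have hza2' : ∀ x : D, za * (za * x) = x := fun x => by rw [← mul_assoc, hza2, one_mul]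
  have hzb2' : ∀ x : D, zb * (zb * x) = x := fun x => by rw [← mul_assoc, hzb2, one_mul]
  have hinvza : za⁻¹ = za := inv_eq_of_mul_eq_one_right hza2
  have hinvzb : zb⁻¹ = zb := inv_eq_of_mul_eq_one_right hzb2
  -- distinctness of the three involutions
  have hzazb : za ≠ zb := by
    intro h
    rw [← h, haza, hza2] at hs1
    exact hza1 hs1
  have hzc1 : za * zb ≠ 1 := by
    intro h
    have : za = zb := by rw [← hinvzb]; exact eq_inv_of_mul_eq_one_left h
    exact hzazb this
  have hzca : za * zb ≠ za := by
    intro h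
    exact hzb1 (mul_left_cancel (show za * zb = za * 1 by rw [mul_one]; exact h))
  have hzcb : za * zb ≠ zb := by
    intro h
    exact hza1 (mul_right_cancel (show za * zb = 1 * zb by rw [one_mul]; exact h))
  -- action table
  have t3 : a • (za * zb) = zb := by
    rw [smul_mul', haza, hs1, mul_comm zb za, hza2']
  have t6 : b • (za * zb) = za := by
    rw [smul_mul', hr1, hbzb, mul_assoc, hzb2, mul_one]
  -- (ab)^3 = 1
  have ht3 : (a * b) * ((a * b) * (a * b)) = 1 := by
    apply FaithfulSMul.eq_of_smul_eq_smul (α := D)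
    intro d
    rw [one_smul]
    rcases ka d with h1 | h1 <;> rcases kb d with h2 | h2 <;>
      simp only [mul_smul, smul_mul', h1, h2, hr1, hs1, haza, hbzb] <;>
      simp [mul_comm, mul_left_comm, mul_assoc, hza2, hzb2, hza2', hzb2']
  have habab : (a * b) * (a * b) = b * a := by
    have h := inv_eq_of_mul_eq_one_right ht3
    rw [mul_inv_rev, hinvb, hinva] at h
    exact h.symm
  have hbab : b * (a * b) = a * (b * a) := by
    calc b * (a * b) = (a * a) * (b * (a * b)) := by rw [haa, one_mul]
      _ = a * ((a * b) * (a * b)) := by simp [mul_assoc]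
      _ = a * (b * a) := by rw [habab]
  have haa' : ∀ x : G, a * (a * x) = x := fun x => by rw [← mul_assoc, haa, one_mul]
  have hbb' : ∀ x : G, b * (b * x) = x := fun x => by rw [← mul_assoc, hbb, one_mul]
  have hbab2 : b * a * b = a * b * a := by
    rw [mul_assoc, hbab, ← mul_assoc]
  have hbab' : ∀ x : G, b * (a * (b * x)) = a * (b * (a * x)) := fun x => by
    have h : (b * a * b) * x = (a * b * a) * x := by rw [hbab2]
    simpa [mul_assoc] using h
  -- the subgroup S = {1, a, b, ab, ba, aba}
  set S : Subgroup G :=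
    { carrier := {1, a, b, a * b, b * a, a * b * a}
      one_mem' := by left; rfl
      mul_mem' := by
        rintro x y hx hy
        simp only [Set.mem_insert_iff, Set.mem_singleton_iff] at hx hy ⊢
        rcases hx with rfl | rfl | rfl | rfl | rfl | rfl <;>
          rcases hy with rfl | rfl | rfl | rfl | rfl | rfl <;>
          simp [mul_assoc, haa, hbb, haa', hbb', hbab, hbab']
      inv_mem' := by
        rintro x hx
        simp only [Set.mem_insert_iff, Set.mem_singleton_iff] at hx ⊢
        rcases hx with rfl | rfl | rfl | rfl | rfl | rfl <;>
          simp [mul_inv_rev, hinva, hinvb, mul_assoc] } with hSdef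
  have hSset : (S : Set G) = {1, a, b, a * b, b * a, a * b * a} := rfl
  have hLS : A ⊔ B = S := by
    apply le_antisymm
    · refine sup_le ?_ ?_
      · intro x hx
        have hx' : x ∈ ({1, a} : Set G) := by rw [← hAset]; exact hx
        rcases hx' with rfl | rfl
        · exact S.one_mem
        · show x ∈ ({1, x, b, x * b, b * x, x * b * x} : Set G)
          right; left; rfl
      · intro x hx
        have hx' : x ∈ ({1, b} : Set G) := by rw [← hBset]; exact hx
        rcases hx' with rfl | rfl
        · exact S.one_mem
        · show x ∈ ({1, a, x, a * x, x * a, a * x * a} : Set G)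
          right; right; left; rfl
    · intro x hx
      have hx' : x = 1 ∨ x = a ∨ x = b ∨ x = a * b ∨ x = b * a ∨ x = a * b * a := hx
      have haL : a ∈ A ⊔ B := Subgroup.mem_sup_left haA
      have hbL : b ∈ A ⊔ B := Subgroup.mem_sup_right hbB
      rcases hx' with rfl | rfl | rfl | rfl | rfl | rfl
      · exact one_mem _
      · exact haL
      · exact hbL
      · exact mul_mem haL hbL
      · exact mul_mem hbL haL
      · exact mul_mem (mul_mem haL hbL) haL
  have hLmem : ∀ x : G, x ∈ A ⊔ B ↔
      (x = 1 ∨ x = a ∨ x = b ∨ x = a * b ∨ x = b * a ∨ x = a * b * a) := by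
    intro x
    rw [hLS]
    exact Iff.rfl
  -- the set Z of the three nontrivial elements of V
  set Z : Set D := {za, zb, za * zb} with hZdef
  have hZinv : ∀ g : G, g ∈ A ⊔ B → ∀ z ∈ Z, g • z ∈ Z := by
    intro g hg z hz
    have hz' : z = za ∨ z = zb ∨ z = za * zb := hz
    rcases (hLmem g).mp hg with rfl | rfl | rfl | rfl | rfl | rfl <;>
      rcases hz' with h | h | h <;> rw [h] <;>
      simp only [one_smul, mul_smul, haza, hbzb, hr1, hs1, t3, t6, mul_comm zb za] <;>
      simp [hZdef, Set.mem_insert_iff, mul_comm]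
  have hperm : ∀ g : ↥(A ⊔ B), ∀ x : D, x ∈ Z ↔ (g : G) • x ∈ Z := by
    intro g x
    constructor
    · exact hZinv g g.2 x
    · intro h
      have := hZinv ((g : G))⁻¹ (inv_mem g.2) _ h
      rwa [inv_smul_smul] at this
  set ψ : ↥(A ⊔ B) →* Equiv.Perm ↥Z :=
    { toFun := fun g => Equiv.Perm.subtypePerm (MulAction.toPerm (g : G)) (fun x => (hperm g x).symm)
      map_one' := by
        ext x
        simp [Equiv.Perm.subtypePerm_apply]
      map_mul' := by
        intro g h
        ext x
        simp [Equiv.Perm.subtypePerm_apply, mul_smul]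
        rfl } with hψdef
  have hψapp : ∀ (g : ↥(A ⊔ B)) (z : D) (hz : z ∈ Z),
      ((ψ g ⟨z, hz⟩ : ↥Z) : D) = (g : G) • z := fun g z hz => rfl
  have hfixargs : ∀ g : ↥(A ⊔ B), ψ g = 1 → ∀ z : D, z ∈ Z → (g : G) • z = z := by
    intro g hg z hz
    have h1 : ψ g ⟨z, hz⟩ = ⟨z, hz⟩ := by rw [hg]; rfl
    have h2 : ((ψ g ⟨z, hz⟩ : ↥Z) : D) = z := congrArg Subtype.val h1
    rwa [hψapp g z hz] at h2
  -- memberships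
  have haL : a ∈ A ⊔ B := Subgroup.mem_sup_left haA
  have hbL : b ∈ A ⊔ B := Subgroup.mem_sup_right hbB
  have hzaZ : za ∈ Z := by left; rfl
  have hzbZ : zb ∈ Z := by right; left; rfl
  have hzcZ : za * zb ∈ Z := by right; right; rfl
  have hψinj : Function.Injective ψ := by
    rw [injective_iff_map_eq_one]
    intro g hg
    have hfix := hfixargs g hg
    have hg6 := (hLmem (g : G)).mp g.2
    have hgeq : (g : G) = 1 := by
      rcases hg6 with h | h | h | h | h | h
      · exact h
      · exfalso
        have := hfix zb hzbZ
        rw [h, hs1] at this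
        exact hza1 (mul_left_cancel (show zb * za = zb * 1 by rw [mul_one]; exact this))
      · exfalso
        have := hfix za hzaZ
        rw [h, hr1] at this
        exact hzb1 (mul_left_cancel (show za * zb = za * 1 by rw [mul_one]; exact this))
      · exfalso
        have := hfix za hzaZ
        rw [h, mul_smul, hr1, t3] at this
        exact hzazb this.symm
      · exfalso
        have := hfix zb hzbZ
        rw [h, mul_smul, hs1, mul_comm zb za, t6] at this
        exact hzazb this
      · exfalso
        have := hfix za hzaZ
        rw [h, mul_smul, mul_smul, haza, hr1, t3] at this
        exact hzazb this.symm
    exact Subtype.ext hgeq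
  -- cardinalities
  haveI hZfin : Finite ↥Z := Set.Finite.to_subtype (Set.toFinite _)
  haveI := Fintype.ofFinite ↥Z
  have hZ3 : Nat.card ↥Z = 3 := by
    rw [Nat.card_coe_set_eq, hZdef]
    have h1n : za ∉ ({zb, za * zb} : Set D) := by
      simp only [Set.mem_insert_iff, Set.mem_singleton_iff]
      push_neg
      exact ⟨hzazb, fun h => hzca h.symm⟩
    have h2n : zb ∉ ({za * zb} : Set D) := by
      simp only [Set.mem_singleton_iff]
      exact fun h => hzcb h.symm
    rw [Set.ncard_insert_of_notMem h1n (Set.toFinite _),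
      Set.ncard_insert_of_notMem h2n (Set.toFinite _), Set.ncard_singleton]
  have hZ3' : Fintype.card ↥Z = 3 := by
    rw [← Nat.card_eq_fintype_card, hZ3]
  have hperm6 : Nat.card (Equiv.Perm ↥Z) = 6 := by
    rw [Nat.card_eq_fintype_card, Fintype.card_perm, hZ3']
    rfl
  -- order-2 and order-3 elements in the range
  set aL : ↥(A ⊔ B) := ⟨a, haL⟩ with haLdef
  set tL : ↥(A ⊔ B) := ⟨a * b, mul_mem haL hbL⟩ with htLdef
  have haL2 : aL ^ 2 = 1 := by
    refine Subtype.ext ?_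
    push_cast
    rw [pow_two]
    exact haa
  have htL3 : tL ^ 3 = 1 := by
    refine Subtype.ext ?_
    push_cast
    rw [pow_succ, pow_two, mul_assoc]
    exact ht3
  have hψa1 : ψ aL ≠ 1 := by
    intro h
    have := hfixargs aL h zb hzbZ
    rw [haLdef] at this
    rw [hs1] at this
    exact hza1 (mul_left_cancel (show zb * za = zb * 1 by rw [mul_one]; exact this))
  have hψt1 : ψ tL ≠ 1 := by
    intro h
    have := hfixargs tL h za hzaZ
    rw [htLdef] at this
    rw [mul_smul, hr1, t3] at this
    exact hzazb this.symm
  haveI : Fact (Nat.Prime 2) := ⟨by norm_num⟩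
  haveI : Fact (Nat.Prime 3) := ⟨by norm_num⟩
  have horda : orderOf (ψ aL) = 2 :=
    orderOf_eq_prime (by rw [← map_pow, haL2, map_one]) hψa1
  have hordt : orderOf (ψ tL) = 3 :=
    orderOf_eq_prime (by rw [← map_pow, htL3, map_one]) hψt1
  haveI : Finite (Equiv.Perm ↥Z) := Finite.of_fintype _
  have hdvd2 : 2 ∣ Nat.card ↥ψ.range := by
    rw [← horda]
    have : orderOf (⟨ψ aL, ⟨aL, rfl⟩⟩ : ↥ψ.range) = orderOf (ψ aL) := by
      rw [← orderOf_injective ψ.range.subtype Subtype.coe_injective]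
      rfl
    rw [← this]
    exact orderOf_dvd_natCard _
  have hdvd3 : 3 ∣ Nat.card ↥ψ.range := by
    rw [← hordt]
    have : orderOf (⟨ψ tL, ⟨tL, rfl⟩⟩ : ↥ψ.range) = orderOf (ψ tL) := by
      rw [← orderOf_injective ψ.range.subtype Subtype.coe_injective]
      rfl
    rw [← this]
    exact orderOf_dvd_natCard _
  have hdvd6 : 6 ∣ Nat.card ↥ψ.range :=
    Nat.Coprime.mul_dvd_of_dvd_of_dvd (by norm_num) hdvd2 hdvd3
  have hle6 : Nat.card ↥ψ.range ≤ 6 := by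
    rw [← hperm6]
    exact Subgroup.card_le_card_group _
  have hpos : 0 < Nat.card ↥ψ.range := Nat.card_pos
  have h6le : 6 ≤ Nat.card ↥ψ.range := Nat.le_of_dvd hpos hdvd6
  have hrange6 : Nat.card ↥ψ.range = 6 := le_antisymm hle6 h6le
  have hrtop : ψ.range = ⊤ := Subgroup.eq_top_of_card_eq _ (by rw [hrange6, hperm6])
  have hψsurj : Function.Surjective ψ := MonoidHom.range_eq_top.mp hrtop
  have e1 : ↥(A ⊔ B) ≃* Equiv.Perm ↥Z := MulEquiv.ofBijective ψ ⟨hψinj, hψsurj⟩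
  have eZ : ↥Z ≃ Fin 3 := Fintype.equivFinOfCardEq hZ3'
  have e2 : Equiv.Perm ↥Z ≃* Equiv.Perm (Fin 3) :=
    { toFun := fun π => eZ.permCongr π
      invFun := fun π => eZ.symm.permCongr π
      left_inv := fun π => by ext x; simp
      right_inv := fun π => by ext x; simp
      map_mul' := fun π σ => by ext x; simp }
  -- the subgroup V = {1, za, zb, za*zb}
  set V : Subgroup D :=
    { carrier := {1, za, zb, za * zb}
      one_mem' := by left; rfl
      mul_mem' := by
        rintro x y hx hy
        simp only [Set.mem_insert_iff, Set.mem_singleton_iff] at hx hy ⊢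
        rcases hx with rfl | rfl | rfl | rfl <;> rcases hy with rfl | rfl | rfl | rfl <;>
          simp [mul_comm, mul_left_comm, mul_assoc, hza2, hzb2, hza2', hzb2']
      inv_mem' := by
        rintro x hx
        simp only [Set.mem_insert_iff, Set.mem_singleton_iff] at hx ⊢
        rcases hx with rfl | rfl | rfl | rfl <;>
          simp [mul_inv_rev, hinvza, hinvzb, mul_comm] } with hVdef
  have hVset : (V : Set D) = {1, za, zb, za * zb} := rfl
  have hVmem : ∀ x : D, x ∈ V ↔ (x = 1 ∨ x = za ∨ x = zb ∨ x = za * zb) := fun x => Iff.rfl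
  -- actComm = V
  set T : Subgroup G :=
    { carrier := {g : G | ∀ w : D, w⁻¹ * g • w ∈ V}
      one_mem' := by
        intro w
        rw [one_smul, inv_mul_cancel]
        exact V.one_mem
      mul_mem' := by
        intro g h hg hh w
        have h1 := hh w
        have h2 := hg (h • w)
        have heq : w⁻¹ * (g * h) • w = (w⁻¹ * h • w) * ((h • w)⁻¹ * g • (h • w)) := by
          rw [mul_smul]
          simp [mul_assoc, mul_comm, mul_left_comm]
        rw [heq]
        exact mul_mem h1 h2
      inv_mem' := by
        intro g hg w
        have h1 := hg (g⁻¹ • w)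
        rw [smul_inv_smul] at h1
        have heq : w⁻¹ * g⁻¹ • w = ((g⁻¹ • w)⁻¹ * w)⁻¹ := by
          rw [mul_inv_rev, inv_inv, mul_comm]
        rw [heq]
        exact inv_mem h1 } with hTdef
  have haT : a ∈ T := by
    intro w
    rcases ka w with h | h <;> rw [h]
    · rw [inv_mul_cancel]
      exact V.one_mem
    · rw [← mul_assoc, inv_mul_cancel, one_mul]
      rw [hVmem]
      right; left; rfl
  have hbT : b ∈ T := by
    intro w
    rcases kb w with h | h <;> rw [h]
    · rw [inv_mul_cancel]
      exact V.one_mem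
    · rw [← mul_assoc, inv_mul_cancel, one_mul]
      rw [hVmem]
      right; right; left; rfl
  have hLT : A ⊔ B ≤ T := by
    refine sup_le ?_ ?_
    · intro x hx
      have hx' : x ∈ ({1, a} : Set G) := by rw [← hAset]; exact hx
      rcases hx' with rfl | rfl
      · exact T.one_mem
      · exact haT
    · intro x hx
      have hx' : x ∈ ({1, b} : Set G) := by rw [← hBset]; exact hx
      rcases hx' with rfl | rfl
      · exact T.one_mem
      · exact hbT
  have hVeq : actComm G ((A ⊔ B : Subgroup G) : Set G) (⊤ : Subgroup D) = V := by
    apply le_antisymm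
    · rw [actComm, Subgroup.closure_le]
      rintro x ⟨w, -, g, hg, rfl⟩
      exact hLT hg w
    · intro x hx
      rcases (hVmem x).mp hx with rfl | rfl | rfl | rfl
      · exact one_mem _
      · refine Subgroup.subset_closure ?_
        refine ⟨d₀, Subgroup.mem_top d₀, a, haL, ?_⟩
        rw [hd₀, ← mul_assoc, inv_mul_cancel, one_mul]
      · refine Subgroup.subset_closure ?_
        refine ⟨e₀, Subgroup.mem_top e₀, b, hbL, ?_⟩
        rw [he₀, ← mul_assoc, inv_mul_cancel, one_mul]
      · refine mul_mem ?_ ?_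
        · refine Subgroup.subset_closure ⟨d₀, Subgroup.mem_top d₀, a, haL, ?_⟩
          rw [hd₀, ← mul_assoc, inv_mul_cancel, one_mul]
        · refine Subgroup.subset_closure ⟨e₀, Subgroup.mem_top e₀, b, hbL, ?_⟩
          rw [he₀, ← mul_assoc, inv_mul_cancel, one_mul]
  -- card V = 4
  have hVcard : Nat.card ↥V = 4 := by
    have h1n : (1 : D) ∉ ({za, zb, za * zb} : Set D) := by
      simp only [Set.mem_insert_iff, Set.mem_singleton_iff]
      push_neg
      exact ⟨Ne.symm hza1, Ne.symm hzb1, Ne.symm hzc1⟩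
    have h2n : za ∉ ({zb, za * zb} : Set D) := by
      simp only [Set.mem_insert_iff, Set.mem_singleton_iff]
      push_neg
      exact ⟨hzazb, fun h => hzca h.symm⟩
    have h3n : zb ∉ ({za * zb} : Set D) := by
      simp only [Set.mem_singleton_iff]
      exact fun h => hzcb h.symm
    have : Nat.card ↥(V : Set D) = 4 := by
      rw [Nat.card_coe_set_eq, hVset, Set.ncard_insert_of_notMem h1n (Set.toFinite _),
        Set.ncard_insert_of_notMem h2n (Set.toFinite _),
        Set.ncard_insert_of_notMem h3n (Set.toFinite _), Set.ncard_singleton]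
    exact this
  have hVsq : ∀ x ∈ V, x ^ 2 = 1 := by
    intro x hx
    rw [pow_two]
    rcases (hVmem x).mp hx with rfl | rfl | rfl | rfl
    · rw [one_mul]
    · exact hza2
    · exact hzb2
    · simp [mul_comm, mul_left_comm, mul_assoc, hza2, hzb2, hza2', hzb2']
  -- fixed subgroup C
  have hCmem : ∀ x : D, x ∈ fixedSub G D ((A ⊔ B : Subgroup G) : Set G) ↔
      (a • x = x ∧ b • x = x) := by
    intro x
    rw [mem_fixedSub_iff]
    constructor
    · intro h
      exact ⟨h a haL, h b hbL⟩
    · rintro ⟨h1, h2⟩ g hg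
      rcases (hLmem g).mp hg with rfl | rfl | rfl | rfl | rfl | rfl
      · exact one_smul _ _
      · exact h1
      · exact h2
      · rw [mul_smul, h2, h1]
      · rw [mul_smul, h1, h2]
      · rw [mul_smul, mul_smul, h1, h2, h1]
  refine ⟨⟨e1.trans e2⟩, ⟨?_, ?_⟩, ?_, ?_⟩
  · rw [hVeq]
    exact hVcard
  · rw [hVeq]
    exact hVsq
  · rw [hVeq]
    rw [Subgroup.eq_bot_iff_forall]
    rintro x ⟨hxV, hxC⟩
    obtain ⟨hax, hbx⟩ := (hCmem x).mp hxC
    rcases (hVmem x).mp hxV with h | h | h | h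
    · exact h
    · exfalso
      rw [h, hr1] at hbx
      exact hzb1 (mul_left_cancel (show za * zb = za * 1 by rw [mul_one]; exact hbx))
    · exfalso
      rw [h, hs1] at hax
      exact hza1 (mul_left_cancel (show zb * za = zb * 1 by rw [mul_one]; exact hax))
    · exfalso
      rw [h, t3] at hax
      exact hza1 (mul_right_cancel (show (1:D) * zb = za * zb by
        rw [one_mul]; exact hax)).symm
  · rw [hVeq]
    rw [Subgroup.eq_top_iff']
    intro d
    have hmemV : ∀ v : D, v ∈ V → v ∈ V ⊔ fixedSub G D ((A ⊔ B : Subgroup G) : Set G) :=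
      fun v hv => Subgroup.mem_sup_left hv
    have hmemC : ∀ v : D, v ∈ fixedSub G D ((A ⊔ B : Subgroup G) : Set G) →
        v ∈ V ⊔ fixedSub G D ((A ⊔ B : Subgroup G) : Set G) :=
      fun v hv => Subgroup.mem_sup_right hv
    rcases ka d with h1 | h1 <;> rcases kb d with h2 | h2
    · exact hmemC d ((hCmem d).mpr ⟨h1, h2⟩)
    · -- a fixes d, b moves d: correction za
      have he : d * za ∈ fixedSub G D ((A ⊔ B : Subgroup G) : Set G) := by
        refine (hCmem _).mpr ⟨?_, ?_⟩
        · rw [smul_mul', h1, haza]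
        · rw [smul_mul', h2, hr1]
          simp [mul_comm, mul_left_comm, mul_assoc, hza2, hzb2, hza2', hzb2']
      have hd : d = za * (d * za) := by
        simp [mul_comm, mul_left_comm, mul_assoc, hza2, hzb2, hza2', hzb2']
      rw [hd]
      exact mul_mem (hmemV za ((hVmem za).mpr (by right; left; rfl))) (hmemC _ he)
    · -- a moves d, b fixes d: correction zb
      have he : d * zb ∈ fixedSub G D ((A ⊔ B : Subgroup G) : Set G) := by
        refine (hCmem _).mpr ⟨?_, ?_⟩
        · rw [smul_mul', h1, hs1]
          simp [mul_comm, mul_left_comm, mul_assoc, hza2, hzb2, hza2', hzb2']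
        · rw [smul_mul', h2, hbzb]
      have hd : d = zb * (d * zb) := by
        simp [mul_comm, mul_left_comm, mul_assoc, hza2, hzb2, hza2', hzb2']
      rw [hd]
      exact mul_mem (hmemV zb ((hVmem zb).mpr (by right; right; left; rfl))) (hmemC _ he)
    · -- both move d: correction za*zb
      have he : d * (za * zb) ∈ fixedSub G D ((A ⊔ B : Subgroup G) : Set G) := by
        refine (hCmem _).mpr ⟨?_, ?_⟩
        · rw [smul_mul', h1, t3]
          simp [mul_comm, mul_left_comm, mul_assoc, hza2, hzb2, hza2', hzb2']
        · rw [smul_mul', h2, t6]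
          simp [mul_comm, mul_left_comm, mul_assoc, hza2, hzb2, hza2', hzb2']
      have hd : d = (za * zb) * (d * (za * zb)) := by
        simp [mul_comm, mul_left_comm, mul_assoc, hza2, hzb2, hza2', hzb2']
      rw [hd]
      exact mul_mem (hmemV _ ((hVmem _).mpr (by right; right; right; rfl))) (hmemC _ he)

end Main3

/-- Suppose the finite group `G` acts faithfully on the abelian
discrete `2`-toral group `D` with no over-offenders, and `A`, `B` are non-commuting
best offenders of order `2`.  Then `L = ⟨A,B⟩ ≅ S₃`, `[D,L]` is elementary abelian
of order `4`, and `D = [D,L] × C_D(L)`. -/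
theorem noncommuting_best_offenders_sym3 {G D : Type*} [Group G] [Finite G]
    [CommGroup D] [MulDistribMulAction G D] [FaithfulSMul G D]
    (hD : IsDiscretePToral 2 D) (D₀ : Subgroup D) (hD₀ : IsMaxDivisible D₀)
    (hno : ∀ A' : Subgroup G, ¬ IsOverOffender 2 D₀ A')
    (A B : Subgroup G) (hA : IsBestOffender 2 D₀ A) (hB : IsBestOffender 2 D₀ B)
    (hcA : Nat.card A = 2) (hcB : Nat.card B = 2)
    (hncomm : ∃ a ∈ A, ∃ b ∈ B, a * b ≠ b * a) :
    Nonempty (↥(A ⊔ B : Subgroup G) ≃* Equiv.Perm (Fin 3)) ∧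
      (Nat.card ↥(actComm G ((A ⊔ B : Subgroup G) : Set G) (⊤ : Subgroup D)) = 4 ∧
        ∀ x ∈ actComm G ((A ⊔ B : Subgroup G) : Set G) (⊤ : Subgroup D), x ^ 2 = 1) ∧
      (actComm G ((A ⊔ B : Subgroup G) : Set G) (⊤ : Subgroup D) ⊓
          fixedSub G D (((A ⊔ B : Subgroup G)) : Set G) = ⊥ ∧
        actComm G ((A ⊔ B : Subgroup G) : Set G) (⊤ : Subgroup D) ⊔
          fixedSub G D (((A ⊔ B : Subgroup G)) : Set G) = ⊤) := by
  
  classical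
  have hD₀idx : D₀.index ≠ 0 := index_ne_zero_of_toral hD hD₀
  obtain ⟨a, haA, ha1, haa, hAset, hidxa, hDa, hidx2a⟩ :=
    bestOffender_two_structure hD₀idx hno hA hcA
  obtain ⟨b, hbB, hb1, hbb, hBset, hidxb, hDb, hidx2b⟩ :=
    bestOffender_two_structure hD₀idx hno hB hcB
  have hab : a * b ≠ b * a := by
    obtain ⟨a', ha', b', hb', hne⟩ := hncomm
    have ha'' : a' ∈ ({1, a} : Set G) := by rw [← hAset]; exact ha'
    have hb'' : b' ∈ ({1, b} : Set G) := by rw [← hBset]; exact hb'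
    rcases ha'' with rfl | rfl
    · exact absurd (by rw [one_mul, mul_one]) hne
    · rcases hb'' with rfl | rfl
      · exact absurd (by rw [one_mul, mul_one]) hne
      · exact hne
  obtain ⟨za, hza1, hza2, haza, ka, d₀, hd₀⟩ := exists_z a haa hidxa
  obtain ⟨zb, hzb1, hzb2, hbzb, kb, e₀, he₀⟩ := exists_z b hbb hidxb
  have hDa' : ∀ x ∈ D₀, a • x = x := fun x hx => hDa hx a rfl
  have hDb' : ∀ x ∈ D₀, b • x = x := fun x hx => hDb hx b rfl
  rcases kb za with hr | hr
  · rcases ka zb with hs | hs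
    · exact (case00_false a b hab haa hbb hza2 hzb2 ka kb haza hbzb hr hs).elim
    · exact (caseD8_false hD₀idx hno b a (fun h => hab h.symm) hbb haa hza1 hzb2 hza2
        kb ka hbzb haza hs hr ⟨e₀, he₀⟩ hDb' hDa' hidx2b).elim
  · rcases ka zb with hs | hs
    · exact (caseD8_false hD₀idx hno a b hab haa hbb hzb1 hza2 hzb2 ka kb haza hbzb
        hr hs ⟨d₀, hd₀⟩ hDa' hDb' hidx2a).elim
    · exact main_case A B a b haA hbB hAset hBset d₀ e₀ hab haa hbb hza1 hzb1 hza2 hzb2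
        ka kb haza hbzb hr hs hd₀ he₀
end
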